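/- arXiv:1410.8479 — 12 statements merged into one kernel-verified Lean document; each statement's English description precedes it below -/
import Mathlib

section
/- Let H be a real Hilbert space, let f : H → ℝ be convex and continuous, let γ > 0, and set f_γ := γ·f + (1/2)‖·‖². Let p : H → H be such that for every y ∈ H, p(y) is a minimizer of x ↦ γ·f(x) + (1/2)‖x − y‖² (i.e., p is the proximal operator prox_{γf}). Define the convex conjugate F(y) := sup_{x ∈ H} ( ⟨y, x⟩ − f_γ(x) ). Then for every y ∈ H the supremum is attained at p(y), i.e. F(y) = ⟨y, p(y)⟩ − f_γ(p(y)), and F is differentiable at y with gradient p(y); that is, prox_{γf}(y) = ∇f_γ*(y). -/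
open scoped RealInnerProductSpace

-- variational inequality for the prox
lemma prox_var_ineq
    {H : Type*} [NormedAddCommGroup H] [InnerProductSpace ℝ H]
    (f : H → ℝ) (hf_conv : ConvexOn ℝ Set.univ f)
    (γ : ℝ) (hγ : 0 < γ)
    (p : H → H)
    (hp : ∀ y x, γ * f (p y) + (1 / 2) * ‖p y - y‖ ^ 2 ≤ γ * f x + (1 / 2) * ‖x - y‖ ^ 2)
    (y x : H) : γ * f (p y) ≤ γ * f x + ⟪p y - y, x - p y⟫ := by
  set q := p y with hq
  by_cases hx : x = q
  · simp [hx]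
  have hnorm : (0:ℝ) < ‖x - q‖ ^ 2 := by
    have h0 : 0 < ‖x - q‖ := norm_pos_iff.mpr (sub_ne_zero.mpr hx)
    positivity
  apply le_of_forall_pos_le_add
  intro ε hε
  set t : ℝ := min 1 (2 * ε / ‖x - q‖ ^ 2) with ht
  have ht0 : 0 < t := lt_min one_pos (by positivity)
  have ht1 : t ≤ 1 := min_le_left _ _
  set w : H := q + t • (x - q) with hw
  have hconv : f w ≤ (1 - t) * f q + t * f x := by
    have := hf_conv.2 (Set.mem_univ q) (Set.mem_univ x)
      (by linarith : (0:ℝ) ≤ 1 - t) (le_of_lt ht0) (by ring)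
    have hwe : (1 - t) • q + t • x = w := by
      rw [hw]; module
    rw [hwe] at this
    simpa using this
  have hexp : ‖w - y‖ ^ 2 = ‖q - y‖ ^ 2 + 2 * t * ⟪q - y, x - q⟫ + t ^ 2 * ‖x - q‖ ^ 2 := by
    have hwy : w - y = (q - y) + t • (x - q) := by rw [hw]; abel
    rw [hwy, norm_add_sq_real, real_inner_smul_right, norm_smul]
    simp [mul_pow, abs_of_pos ht0]
    ring
  have hmin := hp y w
  rw [← hq] at hmin
  have key : t * (γ * f q) ≤ t * (γ * f x + ⟪q - y, x - q⟫) + t ^ 2 / 2 * ‖x - q‖ ^ 2 := by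
    have h1 : γ * f w ≤ γ * ((1 - t) * f q + t * f x) := by
      exact mul_le_mul_of_nonneg_left hconv (le_of_lt hγ)
    nlinarith [hmin, hexp]
  have key2 : γ * f q ≤ γ * f x + ⟪q - y, x - q⟫ + t / 2 * ‖x - q‖ ^ 2 := by
    have := (mul_le_mul_iff_right₀ ht0).mp (by nlinarith : t * (γ * f q) ≤ t * (γ * f x + ⟪q - y, x - q⟫ + t / 2 * ‖x - q‖ ^ 2))
    exact this
  have htb : t / 2 * ‖x - q‖ ^ 2 ≤ ε := by
    have : t ≤ 2 * ε / ‖x - q‖ ^ 2 := min_le_right _ _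
    rw [div_mul_eq_mul_div, div_le_iff₀ (by norm_num : (0:ℝ) < 2)]
    calc t * ‖x - q‖ ^ 2 ≤ (2 * ε / ‖x - q‖ ^ 2) * ‖x - q‖ ^ 2 :=
          mul_le_mul_of_nonneg_right this (le_of_lt hnorm)
      _ = 2 * ε := div_mul_cancel₀ (2 * ε) hnorm.ne'
      _ = ε * 2 := by ring
  linarith

/-- The proximal operator is the gradient of the conjugate of
`f_γ := γ·f + (1/2)‖·‖²`: the supremum defining the conjugate is attained at
`prox_{γf}(y)` and the conjugate is differentiable at `y` with gradient `prox_{γf}(y)`. -/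
theorem prox_eq_gradient_conjugate
    {H : Type*} [NormedAddCommGroup H] [InnerProductSpace ℝ H] [CompleteSpace H]
    (f : H → ℝ) (hf_conv : ConvexOn ℝ Set.univ f) (hf_cont : Continuous f)
    (γ : ℝ) (hγ : 0 < γ)
    (fγ : H → ℝ) (hfγ : fγ = fun x => γ * f x + (1 / 2) * ‖x‖ ^ 2)
    (p : H → H)
    (hp : ∀ y x, γ * f (p y) + (1 / 2) * ‖p y - y‖ ^ 2 ≤ γ * f x + (1 / 2) * ‖x - y‖ ^ 2)
    (F : H → ℝ) (hF : F = fun y => ⨆ x : H, (⟪y, x⟫ - fγ x)) :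
    ∀ y : H, F y = ⟪y, p y⟫ - fγ (p y) ∧ HasGradientAt F (p y) y := by
  -- each term is at most the value at p y
  have hub : ∀ y x : H, ⟪y, x⟫ - fγ x ≤ ⟪y, p y⟫ - fγ (p y) := by
    intro y x
    have h := hp y x
    have e1 : ‖x - y‖ ^ 2 = ‖x‖ ^ 2 - 2 * ⟪x, y⟫ + ‖y‖ ^ 2 := norm_sub_sq_real x y
    have e2 : ‖p y - y‖ ^ 2 = ‖p y‖ ^ 2 - 2 * ⟪p y, y⟫ + ‖y‖ ^ 2 := norm_sub_sq_real (p y) y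
    rw [hfγ]
    simp only
    have c1 : ⟪x, y⟫ = ⟪y, x⟫ := real_inner_comm y x
    have c2 : ⟪p y, y⟫ = ⟪y, p y⟫ := real_inner_comm y (p y)
    nlinarith [h, e1, e2]
  have hFval : ∀ y : H, F y = ⟪y, p y⟫ - fγ (p y) := by
    intro y
    rw [hF]
    apply le_antisymm
    · exact ciSup_le (hub y)
    · exact le_ciSup ⟨⟪y, p y⟫ - fγ (p y), by rintro _ ⟨x, rfl⟩; exact hub y x⟩ (p y)
  -- nonexpansiveness
  have hkey := prox_var_ineq f hf_conv γ hγ p hp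
  have hmono : ∀ y z : H, ‖p z - p y‖ ^ 2 ≤ ⟪z - y, p z - p y⟫ := by
    intro y z
    have h1 := hkey y (p z)
    have h2 := hkey z (p y)
    have e1 : ⟪p y - y, p z - p y⟫ + ⟪p z - z, p y - p z⟫
        = ⟪z - y, p z - p y⟫ - ‖p z - p y‖ ^ 2 := by
      simp only [inner_sub_left, inner_sub_right, real_inner_self_eq_norm_sq]
      linarith [real_inner_comm (p y) (p z), real_inner_comm y (p z), real_inner_comm z (p y),
        real_inner_comm y (p y), real_inner_comm z (p z), norm_sub_sq_real (p z) (p y)]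
    linarith
  have hnonexp : ∀ y z : H, ‖p z - p y‖ ≤ ‖z - y‖ := by
    intro y z
    by_cases h0 : ‖p z - p y‖ = 0
    · rw [h0]; positivity
    · have hpos : 0 < ‖p z - p y‖ := lt_of_le_of_ne (norm_nonneg _) (Ne.symm h0)
      have hcs : ⟪z - y, p z - p y⟫ ≤ ‖z - y‖ * ‖p z - p y‖ := real_inner_le_norm _ _
      have := hmono y z
      nlinarith
  intro y
  refine ⟨hFval y, ?_⟩
  rw [hasGradientAt_iff_isLittleO]
  rw [Asymptotics.isLittleO_iff]
  intro c hc
  have : ∀ᶠ z in nhds y, dist z y < c := Metric.eventually_nhds_iff_ball.mpr ⟨c, hc, fun z hz => by simpa [Metric.mem_ball] using hz⟩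
  filter_upwards [this] with z hz
  have hd : ‖z - y‖ < c := by rwa [← dist_eq_norm]
  -- lower bound : 0 ≤ F z - F y - ⟪p y, z - y⟫
  have hlow : 0 ≤ F z - F y - ⟪p y, z - y⟫ := by
    have hle : ⟪z, p y⟫ - fγ (p y) ≤ F z := by
      rw [hF]
      exact le_ciSup ⟨⟪z, p z⟫ - fγ (p z), by rintro _ ⟨x, rfl⟩; exact hub z x⟩ (p y)
    rw [hFval y]
    have : ⟪p y, z - y⟫ = ⟪z, p y⟫ - ⟪y, p y⟫ := by
      rw [real_inner_comm, inner_sub_left]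
    linarith
  have hup : F z - F y - ⟪p y, z - y⟫ ≤ ‖z - y‖ * ‖p z - p y‖ := by
    have hle : ⟪y, p z⟫ - fγ (p z) ≤ F y := by
      rw [hF]
      exact le_ciSup ⟨⟪y, p y⟫ - fγ (p y), by rintro _ ⟨x, rfl⟩; exact hub y x⟩ (p z)
    rw [hFval z]
    have e : ⟪z, p z⟫ - ⟪y, p z⟫ - ⟪p y, z - y⟫ = ⟪z - y, p z - p y⟫ := by
      simp only [inner_sub_left, inner_sub_right]
      linarith [real_inner_comm (p y) z, real_inner_comm (p y) y]
    have hcs : ⟪z - y, p z - p y⟫ ≤ ‖z - y‖ * ‖p z - p y‖ := real_inner_le_norm _ _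
    linarith
  have hb : F z - F y - ⟪p y, z - y⟫ ≤ c * ‖z - y‖ := by
    calc F z - F y - ⟪p y, z - y⟫ ≤ ‖z - y‖ * ‖p z - p y‖ := hup
      _ ≤ ‖z - y‖ * ‖z - y‖ := mul_le_mul_of_nonneg_left (hnonexp y z) (norm_nonneg _)
      _ ≤ c * ‖z - y‖ := mul_le_mul_of_nonneg_right (le_of_lt hd) (norm_nonneg _)
  rw [Real.norm_eq_abs, abs_of_nonneg hlow]
  simpa using hb
end

section
/- Let H be a real Hilbert space, let γ > 0 and β ≥ σ > 0, and let f : H → ℝ be differentiable, σ-strongly convex and β-smooth. Let p : H → H be the proximal operator prox_{γf}, and define T := p − (1/(1+γβ))·Id. Then for all x, y ∈ H: (1/(1+γσ) − 1/(1+γβ))·⟨T(x) − T(y), x − y⟩ ≥ ‖T(x) − T(y)‖². In particular, if β > σ then T is cocoercive with constant 1/(1/(1+γσ) − 1/(1+γβ)), and if β = σ then T is 0-Lipschitz (i.e. T(x) = T(y) for all x, y, so prox_{γf} − (1/(1+γβ))·Id is constant). -/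
open scoped RealInnerProductSpace

section Aux

variable {H : Type*} [NormedAddCommGroup H] [InnerProductSpace ℝ H]

/-- First-order optimality condition for the prox point. -/
lemma aux_prox_opt (γ β : ℝ) (hγ : 0 < γ) (hβ : 0 < β)
    (f : H → ℝ) (f' : H → H)
    (hsm : ∀ x y, f x ≤ f y + ⟪f' y, x - y⟫ + β / 2 * ‖x - y‖ ^ 2)
    (p : H → H)
    (hp : ∀ y x, γ * f (p y) + (1 / 2) * ‖p y - y‖ ^ 2 ≤ γ * f x + (1 / 2) * ‖x - y‖ ^ 2)
    (y : H) : y - p y = γ • f' (p y) := by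
  set v := p y with hv
  set d := γ • f' v + (v - y) with hd
  have hCb : (0:ℝ) < γ * β + 1 := by nlinarith
  have hdd : ‖d‖ ^ 2 = γ * ⟪f' v, d⟫ + ⟪v - y, d⟫ := by
    rw [← real_inner_self_eq_norm_sq]
    conv_lhs => rw [hd]
    rw [inner_add_left, real_inner_smul_left]
  have hkey : ∀ t : ℝ, 0 ≤ t * ‖d‖ ^ 2 + (γ * β + 1) / 2 * t ^ 2 * ‖d‖ ^ 2 := by
    intro t
    have h1 := hp y (v + t • d)
    have h2 := hsm (v + t • d) v
    have hz1 : v + t • d - v = t • d := by abel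
    have hte : ‖t • d‖ ^ 2 = t ^ 2 * ‖d‖ ^ 2 := by
      rw [norm_smul, mul_pow, Real.norm_eq_abs, sq_abs]
    have hz3 : ‖v + t • d - y‖ ^ 2 = ‖v - y‖ ^ 2 + 2 * (t * ⟪v - y, d⟫) + t ^ 2 * ‖d‖ ^ 2 := by
      have h5 : v + t • d - y = (v - y) + t • d := by abel
      rw [h5, norm_add_sq_real, real_inner_smul_right, hte]
    rw [hz1, real_inner_smul_right, hte] at h2
    rw [hz3] at h1
    have h2' := mul_le_mul_of_nonneg_left h2 hγ.le
    have hdd' : t * ‖d‖ ^ 2 = t * (γ * ⟪f' v, d⟫ + ⟪v - y, d⟫) := by rw [hdd]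
    nlinarith [h1, h2', hdd']
  have h := hkey (-(1 / (γ * β + 1)))
  have hCne : γ * β + 1 ≠ 0 := ne_of_gt hCb
  have key2 : (-(1 / (γ * β + 1))) * ‖d‖ ^ 2
      + (γ * β + 1) / 2 * (-(1 / (γ * β + 1))) ^ 2 * ‖d‖ ^ 2
      = -(1 / (2 * (γ * β + 1))) * ‖d‖ ^ 2 := by
    field_simp
    ring
  rw [key2] at h
  have hpos : 0 < 1 / (2 * (γ * β + 1)) := by positivity
  have h3 : ‖d‖ ^ 2 ≤ 0 := by nlinarith
  have h4 : ‖d‖ ^ 2 = 0 := le_antisymm h3 (by positivity)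
  have h5 : d = 0 := by
    have h6 : ‖d‖ = 0 := by
      nlinarith [norm_nonneg d]
    exact norm_eq_zero.mp h6
  rw [hd] at h5
  have h7 : y - v - γ • f' v = 0 := by
    rw [show y - v - γ • f' v = -(γ • f' v + (v - y)) by abel, h5, neg_zero]
  exact sub_eq_zero.mp h7

/-- Nesterov-type interpolation inequality for a `σ`-strongly convex, `β`-smooth function. -/
lemma aux_nesterov (β σ : ℝ) (hσ : 0 < σ) (hβσ : σ ≤ β)
    (f : H → ℝ) (f' : H → H)
    (hsc : ∀ x y, f x ≥ f y + ⟪f' y, x - y⟫ + σ / 2 * ‖x - y‖ ^ 2)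
    (hsm : ∀ x y, f x ≤ f y + ⟪f' y, x - y⟫ + β / 2 * ‖x - y‖ ^ 2)
    (u v : H) :
    (β + σ) * ⟪f' u - f' v, u - v⟫ ≥ ‖f' u - f' v‖ ^ 2 + σ * β * ‖u - v‖ ^ 2 := by
  set w := u - v with hw
  set g := f' u - f' v with hg
  set e := σ • w - g with he
  have hq : ∀ t : ℝ, σ * ‖w‖ ^ 2 + (2 * t - (β - σ) * t ^ 2) * ‖e‖ ^ 2 ≤ ⟪g, w⟫ := by
    intro t
    have h1 := hsc (v - t • e) u
    have h2 := hsm (v - t • e) v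
    have h3 := hsc (u + t • e) v
    have h4 := hsm (u + t • e) u
    have ew1 : v - t • e - u = -(w + t • e) := by rw [hw]; abel
    have ew2 : v - t • e - v = -(t • e) := by abel
    have ew3 : u + t • e - v = w + t • e := by rw [hw]; abel
    have ew4 : u + t • e - u = t • e := by abel
    have hte : ‖t • e‖ ^ 2 = t ^ 2 * ‖e‖ ^ 2 := by
      rw [norm_smul, mul_pow, Real.norm_eq_abs, sq_abs]
    have n1 : ‖w + t • e‖ ^ 2 = ‖w‖ ^ 2 + 2 * (t * ⟪w, e⟫) + t ^ 2 * ‖e‖ ^ 2 := by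
      rw [norm_add_sq_real, real_inner_smul_right, hte]
    rw [ew1] at h1
    rw [ew2] at h2
    rw [ew3] at h3
    rw [ew4] at h4
    rw [inner_neg_right, inner_add_right, real_inner_smul_right, norm_neg, n1] at h1
    rw [inner_neg_right, real_inner_smul_right, norm_neg, hte] at h2
    rw [inner_add_right, real_inner_smul_right, n1] at h3
    rw [real_inner_smul_right, hte] at h4
    have idg : ⟪g, w⟫ = ⟪f' u, w⟫ - ⟪f' v, w⟫ := by rw [hg, inner_sub_left]
    have idE : ‖e‖ ^ 2 = σ * ⟪w, e⟫ - ⟪g, e⟫ := by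
      rw [← real_inner_self_eq_norm_sq]
      nth_rewrite 1 [he]
      rw [inner_sub_left (𝕜 := ℝ) (σ • w) g e, real_inner_smul_left]
    have idge : ⟪g, e⟫ = ⟪f' u, e⟫ - ⟪f' v, e⟫ := by
      nth_rewrite 1 [hg]
      exact inner_sub_left _ _ _
    have idE' : t * ‖e‖ ^ 2 = t * (σ * ⟪w, e⟫ - (⟪f' u, e⟫ - ⟪f' v, e⟫)) := by
      rw [idE, idge]
    nlinarith [h1, h2, h3, h4, idg, idE']
  have hE : (0:ℝ) ≤ ‖e‖ ^ 2 := by positivity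
  have hexp : ‖e‖ ^ 2 = σ ^ 2 * ‖w‖ ^ 2 - 2 * σ * ⟪g, w⟫ + ‖g‖ ^ 2 := by
    rw [he, norm_sub_sq_real, real_inner_smul_left, norm_smul, mul_pow,
      Real.norm_eq_abs, sq_abs, real_inner_comm w g]
    ring
  rcases eq_or_lt_of_le hβσ with hcase | hcase
  · -- β = σ
    have hE0 : ‖e‖ ^ 2 = 0 := by
      by_contra hne
      have hEpos : 0 < ‖e‖ ^ 2 := lt_of_le_of_ne hE (Ne.symm hne)
      have h := hq ((⟪g, w⟫ - σ * ‖w‖ ^ 2 + 1) / (2 * ‖e‖ ^ 2))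
      rw [← hcase] at h
      have hcalc : (2 * ((⟪g, w⟫ - σ * ‖w‖ ^ 2 + 1) / (2 * ‖e‖ ^ 2))
          - (σ - σ) * ((⟪g, w⟫ - σ * ‖w‖ ^ 2 + 1) / (2 * ‖e‖ ^ 2)) ^ 2) * ‖e‖ ^ 2
          = ⟪g, w⟫ - σ * ‖w‖ ^ 2 + 1 := by
        have hne1 : ‖e‖ ≠ 0 := fun h0 => hne (by rw [h0]; norm_num)
        field_simp
        ring
      rw [hcalc] at h
      linarith
    rw [← hcase]
    nlinarith [hE0, hexp]
  · -- σ < β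
    have hL : 0 < β - σ := sub_pos.mpr hcase
    have h := hq (1 / (β - σ))
    have hcalc : 2 * (1 / (β - σ)) - (β - σ) * (1 / (β - σ)) ^ 2 = 1 / (β - σ) := by
      field_simp
      ring
    rw [hcalc] at h
    have h2 : (β - σ) * (σ * ‖w‖ ^ 2 + 1 / (β - σ) * ‖e‖ ^ 2)
        = (β - σ) * σ * ‖w‖ ^ 2 + ‖e‖ ^ 2 := by
      field_simp
    have h3 := mul_le_mul_of_nonneg_left h hL.le
    rw [h2] at h3
    nlinarith [h3, hexp]

end Aux

/-- Cocoercivity of `prox_{γf} − (1/(1+γβ))·Id` for a `σ`-strongly convex and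
`β`-smooth function `f`. -/
theorem prox_shift_cocoercive
    {H : Type*} [NormedAddCommGroup H] [InnerProductSpace ℝ H] [CompleteSpace H]
    (γ β σ : ℝ) (hγ : 0 < γ) (hσ : 0 < σ) (hβσ : σ ≤ β)
    (f : H → ℝ) (f' : H → H) (hf' : ∀ x, HasGradientAt f (f' x) x)
    (hsc : ∀ x y, f x ≥ f y + ⟪f' y, x - y⟫ + σ / 2 * ‖x - y‖ ^ 2)
    (hsm : ∀ x y, f x ≤ f y + ⟪f' y, x - y⟫ + β / 2 * ‖x - y‖ ^ 2)
    (p : H → H)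
    (hp : ∀ y x, γ * f (p y) + (1 / 2) * ‖p y - y‖ ^ 2 ≤ γ * f x + (1 / 2) * ‖x - y‖ ^ 2)
    (T : H → H) (hT : T = fun x => p x - (1 / (1 + γ * β)) • x) :
    (∀ x y, (1 / (1 + γ * σ) - 1 / (1 + γ * β)) * ⟪T x - T y, x - y⟫ ≥ ‖T x - T y‖ ^ 2)
      ∧ (σ < β → ∀ x y,
          ⟪T x - T y, x - y⟫ ≥ (1 / (1 / (1 + γ * σ) - 1 / (1 + γ * β))) * ‖T x - T y‖ ^ 2)
      ∧ (β = σ → ∀ x y, T x = T y) := by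
  have hβ : 0 < β := lt_of_lt_of_le hσ hβσ
  have hγβ : (0:ℝ) < 1 + γ * β := by nlinarith
  have hγσ : (0:ℝ) < 1 + γ * σ := by nlinarith
  have hγβ' : (1:ℝ) + γ * β ≠ 0 := ne_of_gt hγβ
  have hγσ' : (1:ℝ) + γ * σ ≠ 0 := ne_of_gt hγσ
  have hopt := aux_prox_opt γ β hγ hβ f f' hsm p hp
  have hnest := aux_nesterov β σ hσ hβσ f f' hsc hsm
  have main : ∀ x y, (1 / (1 + γ * σ) - 1 / (1 + γ * β)) * ⟪T x - T y, x - y⟫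
      ≥ ‖T x - T y‖ ^ 2 := by
    intro x y
    have h1 : x - p x = γ • f' (p x) := hopt x
    have h2 : y - p y = γ • f' (p y) := hopt y
    have hxy : x - y = (p x - p y) + γ • (f' (p x) - f' (p y)) := by
      calc x - y = (p x - p y) + ((x - p x) - (y - p y)) := by abel
        _ = _ := by rw [h1, h2, smul_sub]
    have hTd : T x - T y = (p x - p y) - (1 / (1 + γ * β)) • (x - y) := by
      simp only [hT]
      rw [smul_sub]
      abel
    have hwx : ⟪p x - p y, x - y⟫
        = ‖p x - p y‖ ^ 2 + γ * ⟪f' (p x) - f' (p y), p x - p y⟫ := by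
      rw [hxy, inner_add_right, real_inner_smul_right, real_inner_self_eq_norm_sq,
        real_inner_comm (p x - p y)]
    have nxy : ‖x - y‖ ^ 2 = ‖p x - p y‖ ^ 2
        + 2 * (γ * ⟪f' (p x) - f' (p y), p x - p y⟫)
        + γ ^ 2 * ‖f' (p x) - f' (p y)‖ ^ 2 := by
      rw [hxy, norm_add_sq_real, real_inner_smul_right, norm_smul, mul_pow,
        Real.norm_eq_abs, sq_abs, real_inner_comm (p x - p y)]
    have e1 : ⟪T x - T y, x - y⟫
        = (‖p x - p y‖ ^ 2 + γ * ⟪f' (p x) - f' (p y), p x - p y⟫)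
          - (1 / (1 + γ * β)) * (‖p x - p y‖ ^ 2
            + 2 * (γ * ⟪f' (p x) - f' (p y), p x - p y⟫)
            + γ ^ 2 * ‖f' (p x) - f' (p y)‖ ^ 2) := by
      rw [hTd, inner_sub_left, real_inner_smul_left, hwx, real_inner_self_eq_norm_sq, nxy]
    have e2 : ‖T x - T y‖ ^ 2
        = ‖p x - p y‖ ^ 2
          - 2 * ((1 / (1 + γ * β)) * (‖p x - p y‖ ^ 2
            + γ * ⟪f' (p x) - f' (p y), p x - p y⟫))
          + (1 / (1 + γ * β)) ^ 2 * (‖p x - p y‖ ^ 2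
            + 2 * (γ * ⟪f' (p x) - f' (p y), p x - p y⟫)
            + γ ^ 2 * ‖f' (p x) - f' (p y)‖ ^ 2) := by
      rw [hTd, norm_sub_sq_real, real_inner_smul_right, hwx, norm_smul, mul_pow,
        Real.norm_eq_abs, sq_abs, nxy]
    have hn := hnest (p x) (p y)
    set A := ‖p x - p y‖ ^ 2 with hA
    set B := ⟪f' (p x) - f' (p y), p x - p y⟫ with hB
    set C := ‖f' (p x) - f' (p y)‖ ^ 2 with hC
    have key : (1 / (1 + γ * σ) - 1 / (1 + γ * β))
          * ((A + γ * B) - (1 / (1 + γ * β)) * (A + 2 * (γ * B) + γ ^ 2 * C))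
        - (A - 2 * ((1 / (1 + γ * β)) * (A + γ * B))
          + (1 / (1 + γ * β)) ^ 2 * (A + 2 * (γ * B) + γ ^ 2 * C))
        = (γ / (1 + γ * β)) ^ 2 * ((1 + γ * β) / (1 + γ * σ))
          * ((β + σ) * B - (C + σ * β * A)) := by
      field_simp
      ring
    have hfac : (0:ℝ) ≤ (γ / (1 + γ * β)) ^ 2 * ((1 + γ * β) / (1 + γ * σ)) := by positivity
    have h9 : (0:ℝ) ≤ (γ / (1 + γ * β)) ^ 2 * ((1 + γ * β) / (1 + γ * σ))
        * ((β + σ) * B - (C + σ * β * A)) :=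
      mul_nonneg hfac (by linarith)
    rw [e1, e2]
    linarith [key, h9]
  refine ⟨main, ?_, ?_⟩
  · intro hlt x y
    have ha : 0 < 1 / (1 + γ * σ) - 1 / (1 + γ * β) := by
      have h1 : 1 + γ * σ < 1 + γ * β := by nlinarith
      have h2 := one_div_lt_one_div_of_lt hγσ h1
      linarith
    have hm := main x y
    rw [ge_iff_le, show (1 / (1 / (1 + γ * σ) - 1 / (1 + γ * β))) * ‖T x - T y‖ ^ 2
      = ‖T x - T y‖ ^ 2 / (1 / (1 + γ * σ) - 1 / (1 + γ * β)) by ring,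
      div_le_iff₀ ha]
    linarith
  · intro hβσ' x y
    have hm := main x y
    rw [hβσ'] at hm
    simp only [sub_self, zero_mul] at hm
    have h0 : ‖T x - T y‖ ^ 2 = 0 := le_antisymm hm (by positivity)
    have h1 : T x - T y = 0 := by
      have h6 : ‖T x - T y‖ = 0 := by nlinarith [norm_nonneg (T x - T y)]
      exact norm_eq_zero.mp h6
    exact sub_eq_zero.mp h1
end

section
/- Let H be a real Hilbert space, let γ > 0 and β ≥ σ > 0, and let f : H → ℝ be differentiable, σ-strongly convex and β-smooth. Let p : H → H be the proximal operator prox_{γf} and let R := 2p − Id be the reflected proximal operator. Set δ := max((γβ − 1)/(γβ + 1), (1 − γσ)/(1 + γσ)). Then δ ∈ [0, 1) and R is δ-contractive: ‖R(x) − R(y)‖ ≤ δ‖x − y‖ for all x, y ∈ H. -/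
set_option maxHeartbeats 1000000

open scoped RealInnerProductSpace

/-- Cocoercivity of the gradient of a convex `L`-smooth function. -/
lemma coco_aux {H : Type*} [NormedAddCommGroup H] [InnerProductSpace ℝ H]
    (L : ℝ) (hL : 0 < L) (h : H → ℝ) (h' : H → H)
    (hc : ∀ x y, h y + ⟪h' y, x - y⟫ ≤ h x)
    (hs : ∀ x y, h x ≤ h y + ⟪h' y, x - y⟫ + L / 2 * ‖x - y‖ ^ 2) (u v : H) :
    ‖h' u - h' v‖ ^ 2 ≤ L * ⟪h' u - h' v, u - v⟫ := by
  set a := h' u with ha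
  set b := h' v with hb
  have hL' : L ≠ 0 := ne_of_gt hL
  have half : ∀ s t : H, h s + ⟪h' s, t - s⟫ + L⁻¹/2 * ‖h' s - h' t‖^2 ≤ h t := by
    intro s t
    have k1 := hs (t - L⁻¹ • (h' t - h' s)) t
    have k2 := hc (t - L⁻¹ • (h' t - h' s)) s
    have e1 : (t - L⁻¹ • (h' t - h' s)) - t = -(L⁻¹ • (h' t - h' s)) := by abel
    have e2 : ⟪h' t, (t - L⁻¹ • (h' t - h' s)) - t⟫ = -(L⁻¹ * ⟪h' t, h' t - h' s⟫) := by
      rw [e1, inner_neg_right, real_inner_smul_right]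
    have e3 : ‖(t - L⁻¹ • (h' t - h' s)) - t‖^2 = L⁻¹^2 * ‖h' t - h' s‖^2 := by
      rw [e1, norm_neg, norm_smul, mul_pow, Real.norm_eq_abs, sq_abs]
    have e4 : ⟪h' s, (t - L⁻¹ • (h' t - h' s)) - s⟫
        = ⟪h' s, t - s⟫ - L⁻¹ * ⟪h' s, h' t - h' s⟫ := by
      rw [show (t - L⁻¹ • (h' t - h' s)) - s = (t - s) - L⁻¹ • (h' t - h' s) by abel,
        inner_sub_right, real_inner_smul_right]
    rw [e2, e3] at k1
    rw [e4] at k2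
    have r1 : L / 2 * (L⁻¹^2 * ‖h' t - h' s‖^2) = L⁻¹/2 * ‖h' t - h' s‖^2 := by
      field_simp
    rw [r1] at k1
    have e5 : L⁻¹ * ⟪h' t, h' t - h' s⟫ - L⁻¹ * ⟪h' s, h' t - h' s⟫
        = L⁻¹ * ‖h' t - h' s‖^2 := by
      rw [← mul_sub, ← inner_sub_left, real_inner_self_eq_norm_sq]
    have e6 : ‖h' s - h' t‖ = ‖h' t - h' s‖ := norm_sub_rev _ _
    rw [e6]
    linarith [k1, k2, e5]
  have h1 := half u v
  have h2 := half v u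
  have e7 : ‖b - a‖ = ‖a - b‖ := norm_sub_rev _ _
  have e8 : ⟪a, v - u⟫ + ⟪b, u - v⟫ = -⟪a - b, u - v⟫ := by
    rw [inner_sub_left, show (v : H) - u = -(u - v) by abel, inner_neg_right]
    ring
  rw [e7] at h2
  have key : L⁻¹ * ‖a - b‖^2 ≤ ⟪a - b, u - v⟫ := by linarith [h1, h2, e8]
  calc ‖a - b‖^2 = L * (L⁻¹ * ‖a - b‖^2) := by field_simp
    _ ≤ L * ⟪a - b, u - v⟫ := mul_le_mul_of_nonneg_left key (le_of_lt hL)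

/-- The reflected proximal operator `R_{γf} = 2·prox_{γf} − Id` of a `σ`-strongly convex,
`β`-smooth function is `δ`-contractive with
`δ = max((γβ−1)/(γβ+1), (1−γσ)/(1+γσ)) ∈ [0,1)`. -/
theorem reflected_prox_contractive
    {H : Type*} [NormedAddCommGroup H] [InnerProductSpace ℝ H] [CompleteSpace H]
    (γ β σ : ℝ) (hγ : 0 < γ) (hσ : 0 < σ) (hβσ : σ ≤ β)
    (f : H → ℝ) (f' : H → H) (hf' : ∀ x, HasGradientAt f (f' x) x)
    (hsc : ∀ x y, f x ≥ f y + ⟪f' y, x - y⟫ + σ / 2 * ‖x - y‖ ^ 2)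
    (hsm : ∀ x y, f x ≤ f y + ⟪f' y, x - y⟫ + β / 2 * ‖x - y‖ ^ 2)
    (p : H → H)
    (hp : ∀ y x, γ * f (p y) + (1 / 2) * ‖p y - y‖ ^ 2 ≤ γ * f x + (1 / 2) * ‖x - y‖ ^ 2)
    (R : H → H) (hR : R = fun x => (2 : ℝ) • p x - x)
    (δ : ℝ) (hδ : δ = max ((γ * β - 1) / (γ * β + 1)) ((1 - γ * σ) / (1 + γ * σ))) :
    (0 ≤ δ ∧ δ < 1) ∧ ∀ x y, ‖R x - R y‖ ≤ δ * ‖x - y‖ := by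
  have hβ : 0 < β := lt_of_lt_of_le hσ hβσ
  have hγβ : 0 < γ * β + 1 := by positivity
  have hγσ : 0 < 1 + γ * σ := by positivity
  have hδ0 : 0 ≤ δ := by
    rcases le_or_gt 1 (γ * β) with h1 | h1
    · calc (0:ℝ) ≤ (γ * β - 1) / (γ * β + 1) := div_nonneg (by linarith) (by linarith)
        _ ≤ δ := hδ ▸ le_max_left _ _
    · have hσ1 : γ * σ < 1 := lt_of_le_of_lt (by nlinarith) h1
      calc (0:ℝ) ≤ (1 - γ * σ) / (1 + γ * σ) := div_nonneg (by linarith) (by linarith)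
        _ ≤ δ := hδ ▸ le_max_right _ _
  have hδ1 : δ < 1 := by
    rw [hδ]
    apply max_lt
    · rw [div_lt_one hγβ]; linarith
    · rw [div_lt_one hγσ]; nlinarith
  refine ⟨⟨hδ0, hδ1⟩, ?_⟩
  -- key scalar inequalities
  have hKσ1 : 1 - γ * σ ≤ δ * (1 + γ * σ) := by
    have : (1 - γ * σ) / (1 + γ * σ) ≤ δ := hδ ▸ le_max_right _ _
    rwa [div_le_iff₀ hγσ] at this
  have hKβ1 : γ * β - 1 ≤ δ * (1 + γ * β) := by
    have : (γ * β - 1) / (γ * β + 1) ≤ δ := hδ ▸ le_max_left _ _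
    rw [div_le_iff₀ hγβ] at this
    linarith
  have hKσ2 : γ * σ - 1 ≤ δ * (1 + γ * σ) := by
    have h1 : (γ*σ - 1) * (1 + γ*β) ≤ (γ*β - 1) * (1 + γ*σ) := by
      nlinarith [mul_le_mul_of_nonneg_left hβσ hγ.le]
    have h2 : (γ*β - 1) * (1 + γ*σ) ≤ δ * (1 + γ*β) * (1 + γ*σ) :=
      mul_le_mul_of_nonneg_right hKβ1 hγσ.le
    nlinarith [h1, h2, hγβ]
  have hKβ2 : 1 - γ * β ≤ δ * (1 + γ * β) := by
    nlinarith [hKσ1, mul_nonneg hδ0 (mul_nonneg hγ.le (sub_nonneg.mpr hβσ)),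
      mul_le_mul_of_nonneg_left hβσ hγ.le]
  have hKσ : (1 - γ * σ)^2 ≤ δ^2 * (1 + γ * σ)^2 := by
    calc (1 - γ*σ)^2 ≤ (δ * (1 + γ*σ))^2 :=
          sq_le_sq' (by linarith : -(δ * (1 + γ*σ)) ≤ 1 - γ * σ) hKσ1
      _ = δ^2 * (1 + γ*σ)^2 := by ring
  have hKβ : (1 - γ * β)^2 ≤ δ^2 * (1 + γ * β)^2 := by
    calc (1 - γ*β)^2 ≤ (δ * (1 + γ*β))^2 :=
          sq_le_sq' (by linarith : -(δ * (1 + γ*β)) ≤ 1 - γ * β) (by linarith [hKβ1])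
      _ = δ^2 * (1 + γ*β)^2 := by ring
  -- stationarity of the prox
  have hstat : ∀ y, p y - y + γ • f' (p y) = 0 := by
    intro y
    set v := p y with hv
    set b := f' v with hb
    set w := v - y + γ • b with hw
    set ε := (γ * β + 1)⁻¹ with hε
    have hεpos : 0 < ε := inv_pos.mpr hγβ
    have h1 := hp y (v - ε • w)
    have h2 := hsm (v - ε • w) v
    have e1 : (v - ε • w) - v = -(ε • w) := by abel
    have e2 : ⟪b, (v - ε • w) - v⟫ = -(ε * ⟪b, w⟫) := by
      rw [e1, inner_neg_right, real_inner_smul_right]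
    have e3 : ‖(v - ε • w) - v‖^2 = ε^2 * ‖w‖^2 := by
      rw [e1, norm_neg, norm_smul, mul_pow, Real.norm_eq_abs, sq_abs]
    have e4 : ‖(v - ε • w) - y‖^2 = ‖v - y‖^2 - 2 * (ε * ⟪v - y, w⟫) + ε^2 * ‖w‖^2 := by
      rw [show (v - ε • w) - y = (v - y) - ε • w by abel, norm_sub_sq_real,
        real_inner_smul_right, norm_smul, mul_pow, Real.norm_eq_abs, sq_abs]
    rw [e2, e3] at h2
    rw [e4] at h1
    have e5 : ⟪v - y, w⟫ + γ * ⟪b, w⟫ = ‖w‖^2 := by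
      rw [← real_inner_smul_left, ← inner_add_left, ← hw, real_inner_self_eq_norm_sq]
    have e6 : ε * (γ * β + 1) = 1 := inv_mul_cancel₀ (ne_of_gt hγβ)
    have h2' := mul_le_mul_of_nonneg_left h2 hγ.le
    have e5' : ε * ⟪v - y, w⟫ + ε * (γ * ⟪b, w⟫) = ε * ‖w‖^2 := by
      linear_combination ε * e5
    have e6' : ε^2 * (γ * β + 1) * ‖w‖^2 = ε * ‖w‖^2 := by
      linear_combination (ε * ‖w‖^2) * e6
    have hwz : ‖w‖^2 ≤ 0 := by nlinarith [h1, h2', e5', e6', hεpos]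
    have hw0 : w = 0 := by
      have : ‖w‖ = 0 := by nlinarith [norm_nonneg w]
      exact norm_eq_zero.mp this
    rw [hw] at hw0
    exact hw0
  -- main part
  intro x y
  set u := p x with hu
  set v := p y with hv
  set a := f' u with hapx
  set b := f' v with hbpx
  set n := ‖u - v‖^2 with hn
  set g := ‖a - b‖^2 with hg
  set t := ⟪a - b, u - v⟫ with ht
  have hn0 : 0 ≤ n := sq_nonneg _
  have hg0 : 0 ≤ g := sq_nonneg _
  -- monotonicity: σ n ≤ t
  have hmono : σ * n ≤ t := by
    have h1 := hsc u v
    have h2 := hsc v u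
    have e1 : ⟪a, v - u⟫ = -⟪a, u - v⟫ := by
      rw [show (v:H) - u = -(u - v) by abel, inner_neg_right]
    have e2 : ‖v - u‖ = ‖u - v‖ := norm_sub_rev _ _
    simp only [← hapx, ← hbpx, ← hn] at h1 h2
    rw [e1, e2, ← hn] at h2
    rw [ht, inner_sub_left]
    linarith
  have ht0 : 0 ≤ t := le_trans (by positivity) hmono
  -- smoothness: t ≤ β n
  have hsmooth : t ≤ β * n := by
    have h1 := hsm u v
    have h2 := hsm v u
    have e1 : ⟪a, v - u⟫ = -⟪a, u - v⟫ := by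
      rw [show (v:H) - u = -(u - v) by abel, inner_neg_right]
    have e2 : ‖v - u‖ = ‖u - v‖ := norm_sub_rev _ _
    simp only [← hapx, ← hbpx, ← hn] at h1 h2
    rw [e1, e2, ← hn] at h2
    rw [ht, inner_sub_left]
    linarith
  -- interpolation: g + σ β n ≤ (σ + β) t
  have hinterp : g + σ * β * n ≤ (σ + β) * t := by
    have key : ∀ ε : ℝ, 0 < ε →
        g - 2 * σ * t + σ^2 * n ≤ (β - σ + ε) * (t - σ * n) := by
      intro ε hεp
      have hLp : 0 < β - σ + ε := by linarith
      have hc : ∀ s r : H, (f r - σ/2 * ‖r‖^2) + ⟪f' r - σ • r, s - r⟫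
          ≤ f s - σ/2 * ‖s‖^2 := by
        intro s r
        have h1 := hsc s r
        have e3 : ⟪r, s⟫ = ⟪s, r⟫ := real_inner_comm s r
        simp only [← real_inner_self_eq_norm_sq, inner_sub_left, inner_sub_right,
          real_inner_smul_left, real_inner_smul_right, e3] at h1 ⊢
        linarith
      have hs2 : ∀ s r : H, (f s - σ/2 * ‖s‖^2) ≤ (f r - σ/2 * ‖r‖^2) +
          ⟪f' r - σ • r, s - r⟫ + (β - σ + ε)/2 * ‖s - r‖^2 := by
        intro s r
        have h1 := hsm s r
        have e3 : ⟪r, s⟫ = ⟪s, r⟫ := real_inner_comm s r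
        have e4 : 0 ≤ ε * ⟪s - r, s - r⟫ := mul_nonneg hεp.le real_inner_self_nonneg
        simp only [← real_inner_self_eq_norm_sq, inner_sub_left, inner_sub_right,
          real_inner_smul_left, real_inner_smul_right, e3] at h1 e4 ⊢
        linarith
      have key0 : ‖(a - σ • u) - (b - σ • v)‖^2
          ≤ (β - σ + ε) * ⟪(a - σ • u) - (b - σ • v), u - v⟫ :=
        coco_aux (β - σ + ε) hLp (fun z => f z - σ/2 * ‖z‖^2)
          (fun z => f' z - σ • z) hc hs2 u v
      have e4 : (a - σ • u) - (b - σ • v) = (a - b) - σ • (u - v) := by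
        rw [smul_sub]; abel
      rw [e4] at key0
      have e5 : ‖(a - b) - σ • (u - v)‖^2 = g - 2 * σ * t + σ^2 * n := by
        rw [norm_sub_sq_real, real_inner_smul_right, norm_smul, mul_pow,
          Real.norm_eq_abs, sq_abs, ← ht, ← hg, ← hn]
        ring
      have e6 : ⟪(a - b) - σ • (u - v), u - v⟫ = t - σ * n := by
        rw [inner_sub_left, real_inner_smul_left, real_inner_self_eq_norm_sq, ← ht, ← hn]
      rw [e5, e6] at key0
      exact key0
    have htn : 0 ≤ t - σ * n := by linarith
    rcases eq_or_lt_of_le htn with heq | hlt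
    · have h1 := key 1 one_pos
      rw [← heq, mul_zero] at h1
      have hb1 : β * (t - σ * n) = 0 := by rw [← heq, mul_zero]
      have hs1 : σ * (t - σ * n) = 0 := by rw [← heq, mul_zero]
      nlinarith [h1, hb1, hs1]
    · have hfin : g - 2 * σ * t + σ^2 * n ≤ (β - σ) * (t - σ * n) := by
        apply le_of_forall_pos_le_add
        intro ε hεp
        have h1 := key (ε / (t - σ * n)) (div_pos hεp hlt)
        have e : (β - σ + ε / (t - σ * n)) * (t - σ * n)
            = (β - σ) * (t - σ * n) + ε := by
          field_simp
        linarith [h1, e.le, e.ge]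
      nlinarith [hfin]
  -- expressing the points
  have hsx := hstat x
  have hsy := hstat y
  have hx1 : x = u + γ • a := by
    rw [show p x - x + γ • f' (p x) = (u + γ • a) - x by rw [← hu, ← hapx]; abel,
      sub_eq_zero] at hsx
    exact hsx.symm
  have hy1 : y = v + γ • b := by
    rw [show p y - y + γ • f' (p y) = (v + γ • b) - y by rw [← hv, ← hbpx]; abel,
      sub_eq_zero] at hsy
    exact hsy.symm
  have hxy : x - y = (u - v) + γ • (a - b) := by
    rw [hx1, hy1]; module
  have hRxy : R x - R y = (u - v) - γ • (a - b) := by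
    rw [hR]
    show (2:ℝ) • p x - x - ((2:ℝ) • p y - y) = (u - v) - γ • (a - b)
    rw [← hu, ← hv, hx1, hy1]
    module
  have hM : ‖x - y‖^2 = n + 2 * (γ * t) + γ^2 * g := by
    rw [hxy, norm_add_sq_real, real_inner_smul_right, norm_smul, mul_pow,
      Real.norm_eq_abs, sq_abs, real_inner_comm, ← ht, ← hg, ← hn]
  have hN : ‖R x - R y‖^2 = n - 2 * (γ * t) + γ^2 * g := by
    rw [hRxy, norm_sub_sq_real, real_inner_smul_right, norm_smul, mul_pow,
      Real.norm_eq_abs, sq_abs, real_inner_comm, ← ht, ← hg, ← hn]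
  -- the main inequality
  clear_value n g t
  have hmain : n - 2 * (γ * t) + γ^2 * g ≤ δ^2 * (n + 2 * (γ * t) + γ^2 * g) := by
    have hδsq : 0 ≤ 1 - δ^2 := by nlinarith [hδ0, hδ1]
    rcases le_or_gt (γ^2 * σ * β) 1 with hcase | hcase
    · have P1 : 0 ≤ γ^2 * σ * (1 - δ^2) * ((σ + β) * t - g - σ * β * n) :=
        mul_nonneg (by positivity) (by linarith)
      have P2 : 0 ≤ (1 - δ^2) * (1 - γ^2 * σ * β) * (t - σ * n) :=
        mul_nonneg (mul_nonneg hδsq (by linarith)) (by linarith)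
      have P3 : 0 ≤ (2 * γ * σ * (1 + δ^2) - (1 - δ^2) * (1 + γ^2 * σ^2)) * t :=
        mul_nonneg (by linarith [hKσ]) ht0
      have key : 0 ≤ σ * (δ^2 * (n + 2 * (γ * t) + γ^2 * g) - (n - 2 * (γ * t) + γ^2 * g)) := by
        linarith only [P1, P2, P3]
      have key2 := (mul_nonneg_iff_of_pos_left hσ).mp key
      linarith only [key2]
    · have P1 : 0 ≤ γ^2 * β * (1 - δ^2) * ((σ + β) * t - g - σ * β * n) :=
        mul_nonneg (by positivity) (by linarith)
      have P2 : 0 ≤ (1 - δ^2) * (γ^2 * σ * β - 1) * (β * n - t) :=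
        mul_nonneg (mul_nonneg hδsq (by linarith)) (by linarith)
      have P3 : 0 ≤ (2 * γ * β * (1 + δ^2) - (1 - δ^2) * (1 + γ^2 * β^2)) * t :=
        mul_nonneg (by linarith [hKβ]) ht0
      have key : 0 ≤ β * (δ^2 * (n + 2 * (γ * t) + γ^2 * g) - (n - 2 * (γ * t) + γ^2 * g)) := by
        linarith only [P1, P2, P3]
      have key2 := (mul_nonneg_iff_of_pos_left hβ).mp key
      linarith only [key2]
  -- conclude
  have hfin : ‖R x - R y‖^2 ≤ (δ * ‖x - y‖)^2 := by
    calc ‖R x - R y‖^2 = n - 2 * (γ * t) + γ^2 * g := hN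
      _ ≤ δ^2 * (n + 2 * (γ * t) + γ^2 * g) := hmain
      _ = (δ * ‖x - y‖)^2 := by rw [mul_pow, hM]
  exact (pow_le_pow_iff_left₀ (norm_nonneg _)
    (mul_nonneg hδ0 (norm_nonneg _)) two_ne_zero).mp hfin
end

section
/- Let H be a real Hilbert space, let γ > 0 and β ≥ σ > 0. Let f : H → ℝ be differentiable, σ-strongly convex and β-smooth, and let g : H → ℝ be convex and continuous. Let p_f = prox_{γf} and p_g = prox_{γg} be their proximal operators, R_f = 2p_f − Id, R_g = 2p_g − Id the reflected proximal operators, and set δ := max((γβ − 1)/(γβ + 1), (1 − γσ)/(1 + γσ)). Let α ∈ (0, 2/(1+δ)) and define the Douglas–Rachford operator T := (1 − α)·Id + α·(R_g ∘ R_f). Then for every fixed point z̄ of R_g ∘ R_f and every z ∈ H, ‖T(z) − z̄‖ ≤ (|1 − α| + α·δ)·‖z − z̄‖, and |1 − α| + α·δ < 1; consequently the iterates z^{k+1} = T(z^k) converge linearly to z̄ with ‖z^k − z̄‖ ≤ (|1 − α| + α·δ)^k·‖z^0 − z̄‖. -/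
set_option maxHeartbeats 1000000
open scoped RealInnerProductSpace

section dr_aux
variable {H : Type*} [NormedAddCommGroup H] [InnerProductSpace ℝ H]

private lemma dr_coco_half (φ : H → ℝ) (p : H → H) (L : ℝ) (hL : 0 < L)
    (hconv : ∀ x y : H, φ y + ⟪p y, x - y⟫ ≤ φ x)
    (hsm : ∀ x y : H, φ x ≤ φ y + ⟪p y, x - y⟫ + L / 2 * ‖x - y‖ ^ 2)
    (x y : H) : φ x + ⟪p x, y - x⟫ + 1/(2*L) * ‖p y - p x‖^2 ≤ φ y := by
  have hL' : L ≠ 0 := ne_of_gt hL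
  set z : H := y - (1/L) • (p y - p x) with hz
  have h1 := hconv z x
  have h2 := hsm z y
  have hzy : z - y = -((1/L) • (p y - p x)) := by rw [hz]; abel
  have hzx : z - x = (y - x) - (1/L) • (p y - p x) := by rw [hz]; abel
  have e1 : ⟪p y, z - y⟫ = -(1/L) * ⟪p y, p y - p x⟫ := by
    rw [hzy, inner_neg_right, real_inner_smul_right]; ring
  have e2 : ‖z - y‖^2 = (1/L)^2 * ‖p y - p x‖^2 := by
    rw [hzy, norm_neg, norm_smul]
    rw [mul_pow, Real.norm_eq_abs, sq_abs]
  have e3 : ⟪p x, z - x⟫ = ⟪p x, y - x⟫ - (1/L) * ⟪p x, p y - p x⟫ := by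
    rw [hzx, inner_sub_right, real_inner_smul_right]
  have e4 : ‖p y - p x‖^2 = ⟪p y, p y - p x⟫ - ⟪p x, p y - p x⟫ := by
    rw [← inner_sub_left, real_inner_self_eq_norm_sq]
  have c1 : L/2 * ((1/L)^2 * ‖p y - p x‖^2) = 1/(2*L) * ‖p y - p x‖^2 := by
    field_simp
  have c2 : (1/L) * ⟪p y, p y - p x⟫ - (1/L) * ⟪p x, p y - p x⟫
      = (1/L) * ‖p y - p x‖^2 := by rw [e4]; ring
  have c3 : (1/L) * ‖p y - p x‖^2 - 1/(2*L) * ‖p y - p x‖^2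
      = 1/(2*L) * ‖p y - p x‖^2 := by field_simp; ring
  rw [e1] at h2; rw [e2, c1] at h2; rw [e3] at h1
  linarith

private lemma dr_coco (φ : H → ℝ) (p : H → H) (L : ℝ) (hL : 0 < L)
    (hconv : ∀ x y : H, φ y + ⟪p y, x - y⟫ ≤ φ x)
    (hsm : ∀ x y : H, φ x ≤ φ y + ⟪p y, x - y⟫ + L / 2 * ‖x - y‖ ^ 2)
    (x y : H) : ‖p x - p y‖ ^ 2 ≤ L * ⟪p x - p y, x - y⟫ := by
  have h1 := dr_coco_half φ p L hL hconv hsm x y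
  have h2 := dr_coco_half φ p L hL hconv hsm y x
  have e1 : ⟪p x, y - x⟫ + ⟪p y, x - y⟫ = -⟪p x - p y, x - y⟫ := by
    rw [inner_sub_left]
    have : ⟪p x, y - x⟫ = -⟪p x, x - y⟫ := by rw [← inner_neg_right]; congr 1; abel
    rw [this]; ring
  have e2 : ‖p y - p x‖ = ‖p x - p y‖ := norm_sub_rev _ _
  rw [e2] at h1
  have c4 : 1/(2*L) * (2:ℝ) = 1/L := by field_simp
  have h3 : (1/L) * ‖p x - p y‖^2 ≤ ⟪p x - p y, x - y⟫ := by nlinarith [h1, h2, e1, c4]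
  calc ‖p x - p y‖^2 = L * ((1/L) * ‖p x - p y‖^2) := by field_simp
    _ ≤ L * ⟪p x - p y, x - y⟫ := mul_le_mul_of_nonneg_left h3 (le_of_lt hL)

private lemma dr_prox_vi (γ : ℝ) (hγ : 0 < γ) (φ : H → ℝ)
    (hconv : ∀ x y : H, ∀ t : ℝ, 0 ≤ t → t ≤ 1 →
      φ (t • x + (1 - t) • y) ≤ t * φ x + (1 - t) * φ y)
    (p : H → H)
    (hp : ∀ y x, γ * φ (p y) + (1/2) * ‖p y - y‖^2 ≤ γ * φ x + (1/2) * ‖x - y‖^2)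
    (y x : H) : γ * φ (p y) + ⟪y - p y, x - p y⟫ ≤ γ * φ x := by
  set q := p y with hq
  have key : ∀ t : ℝ, 0 < t → t ≤ 1 →
      γ * φ q + ⟪y - q, x - q⟫ ≤ γ * φ x + t/2 * ‖x - q‖^2 := by
    intro t ht0 ht1
    have h1 := hp y (q + t • (x - q))
    have hc := hconv x q t (le_of_lt ht0) ht1
    have heq : q + t • (x - q) = t • x + (1 - t) • q := by
      rw [smul_sub, sub_smul, one_smul]; abel
    rw [heq] at h1
    have hnorm : ‖t • x + (1 - t) • q - y‖^2
        = ‖q - y‖^2 + 2*t*⟪q - y, x - q⟫ + t^2*‖x - q‖^2 := by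
      have : t • x + (1 - t) • q - y = (q - y) + t • (x - q) := by
        rw [smul_sub, sub_smul, one_smul]; abel
      rw [this, norm_add_sq_real, real_inner_smul_right, norm_smul,
        mul_pow, Real.norm_eq_abs, sq_abs]
      ring
    rw [hnorm] at h1
    have h2 : γ * φ (t • x + (1 - t) • q) ≤ γ * (t * φ x + (1 - t) * φ q) :=
      mul_le_mul_of_nonneg_left hc (le_of_lt hγ)
    have h3 : t * (γ * φ q) ≤ t * (γ * φ x) + t * ⟪q - y, x - q⟫ + t^2/2 * ‖x - q‖^2 := by
      nlinarith [h1, h2]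
    have h4 : γ * φ q ≤ γ * φ x + ⟪q - y, x - q⟫ + t/2 * ‖x - q‖^2 := by
      have := mul_le_mul_of_nonneg_left h3 (le_of_lt (one_div_pos.mpr ht0))
      have ht' : (1/t) * t = 1 := by field_simp
      nlinarith [this, ht']
    have h5 : ⟪y - q, x - q⟫ = -⟪q - y, x - q⟫ := by
      rw [← inner_neg_left]; congr 1; abel
    linarith
  have hlim : ∀ ε > 0, γ * φ q + ⟪y - q, x - q⟫ ≤ γ * φ x + ε := by
    intro ε hε
    set C := ‖x - q‖^2 with hC
    have hC0 : 0 ≤ C := sq_nonneg _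
    set t := min 1 (ε / (C + 1)) with ht
    have ht0 : 0 < t := lt_min one_pos (div_pos hε (by linarith))
    have ht1 : t ≤ 1 := min_le_left _ _
    have h := key t ht0 ht1
    have : t/2 * C ≤ ε := by
      have h1 : t ≤ ε / (C + 1) := min_le_right _ _
      have h2 : t * C ≤ (ε / (C + 1)) * C := mul_le_mul_of_nonneg_right h1 hC0
      have h3 : (ε / (C + 1)) * C ≤ ε := by
        rw [div_mul_eq_mul_div, div_le_iff₀ (by linarith : (0:ℝ) < C + 1)]
        nlinarith
      nlinarith [mul_nonneg (le_of_lt ht0) hC0]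
    linarith
  linarith [le_of_forall_pos_le_add hlim]

end dr_aux

private lemma dr_key_real (γ σ β δ X Y t : ℝ) (hγ : 0 < γ) (hσ : 0 < σ) (hβ : σ ≤ β)
    (hX : 0 ≤ X)
    (hC : Y + σ*β*X ≤ (σ+β)*t)
    (hY1 : σ^2*X ≤ Y) (hY2 : Y ≤ β^2*X)
    (Es : (1+γ^2*σ^2)*(1-δ^2) ≤ 2*γ*σ*(1+δ^2))
    (Ea : (1+γ^2*β^2)*(1-δ^2) ≤ 2*γ*β*(1+δ^2)) :
    (1-δ^2)*(X+γ^2*Y) ≤ 2*γ*(1+δ^2)*t := by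
  have hsb : 0 < σ + β := by linarith
  have hP : 0 ≤ 2*γ*(1+δ^2) := by positivity
  have hS : (σ+β)*(1-δ^2)*(X+γ^2*Y) ≤ 2*γ*(1+δ^2)*(Y + σ*β*X) := by
    rcases eq_or_lt_of_le hβ with h | h
    · subst h
      have hYeq : Y = σ^2*X := le_antisymm hY2 hY1
      subst hYeq
      nlinarith [mul_le_mul_of_nonneg_right Es hX]
    · have hLs : 0 ≤ 2*γ*σ*(1+δ^2) - (1+γ^2*σ^2)*(1-δ^2) := by linarith
      have hLa : 0 ≤ 2*γ*β*(1+δ^2) - (1+γ^2*β^2)*(1-δ^2) := by linarith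
      have h1 : 0 ≤ (β^2*X - Y) * (2*γ*σ*(1+δ^2) - (1+γ^2*σ^2)*(1-δ^2)) :=
        mul_nonneg (by linarith) hLs
      have h2 : 0 ≤ (Y - σ^2*X) * (2*γ*β*(1+δ^2) - (1+γ^2*β^2)*(1-δ^2)) :=
        mul_nonneg (by linarith) hLa
      have hd : 0 < β^2 - σ^2 := by nlinarith
      nlinarith [mul_pos hsb hd, mul_nonneg (le_of_lt hsb) h1, mul_nonneg (le_of_lt hsb) h2]
  have h3 : 2*γ*(1+δ^2)*(Y + σ*β*X) ≤ 2*γ*(1+δ^2)*((σ+β)*t) :=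
    mul_le_mul_of_nonneg_left hC hP
  have h4 : (σ+β)*((1-δ^2)*(X+γ^2*Y)) ≤ (σ+β)*(2*γ*(1+δ^2)*t) := by
    ring_nf; ring_nf at hS h3; linarith
  exact le_of_mul_le_mul_left (by linarith [h4]) hsb

private lemma dr_delta_ineq (x δ : ℝ) (hx : 0 < x)
    (h1 : (x-1)/(x+1) ≤ δ) (h2 : (1-x)/(1+x) ≤ δ) :
    (1+x^2)*(1-δ^2) ≤ 2*x*(1+δ^2) := by
  have hx1 : (0:ℝ) < x + 1 := by linarith
  have h1' : x - 1 ≤ δ*(x+1) := by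
    rw [div_le_iff₀ hx1] at h1; linarith
  have h2' : 1 - x ≤ δ*(x+1) := by
    rw [div_le_iff₀ (by linarith : (0:ℝ) < 1 + x)] at h2; linarith
  nlinarith [mul_nonneg (by linarith : (0:ℝ) ≤ δ*(x+1) - (x-1))
    (by linarith : (0:ℝ) ≤ δ*(x+1) + (x-1))]

private lemma dr_sqrt_step (a b c : ℝ) (hb : 0 ≤ b) (hc : 0 ≤ c)
    (h : a^2 ≤ b^2 * c^2) : a ≤ b * c := by
  nlinarith [mul_nonneg hb hc, sq_nonneg (a - b*c), sq_nonneg (a + b*c)]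


section dr_aux2
variable {H : Type*} [NormedAddCommGroup H] [InnerProductSpace ℝ H]

private lemma dr_mono (σ β : ℝ) (f : H → ℝ) (f' : H → H)
    (hsc : ∀ x y, f x ≥ f y + ⟪f' y, x - y⟫ + σ / 2 * ‖x - y‖ ^ 2)
    (u v : H) : σ * ‖u - v‖^2 ≤ ⟪f' u - f' v, u - v⟫ := by
  have h1 := hsc u v
  have h2 := hsc v u
  have e1 : ⟪f' u, v - u⟫ = -⟪f' u, u - v⟫ := by
    rw [← inner_neg_right]; congr 1; abel
  rw [e1, norm_sub_rev v u] at h2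
  rw [inner_sub_left]
  linarith

private lemma dr_interp (σ β : ℝ) (hσ : 0 < σ) (hβσ : σ ≤ β) (f : H → ℝ) (f' : H → H)
    (hsc : ∀ x y, f x ≥ f y + ⟪f' y, x - y⟫ + σ / 2 * ‖x - y‖ ^ 2)
    (hsm : ∀ x y, f x ≤ f y + ⟪f' y, x - y⟫ + β / 2 * ‖x - y‖ ^ 2)
    (u v : H) :
    ‖f' u - f' v‖^2 + σ*β*‖u - v‖^2 ≤ (σ+β)*⟪f' u - f' v, u - v⟫ := by
  have hβ0 : 0 < β := lt_of_lt_of_le hσ hβσ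
  have hfconv' : ∀ x y : H, f y + ⟪f' y, x - y⟫ ≤ f x := by
    intro x y
    have h := hsc x y
    have h2 : 0 ≤ σ/2 * ‖x - y‖^2 := by positivity
    linarith
  have cocoF : ‖f' u - f' v‖^2 ≤ β * ⟪f' u - f' v, u - v⟫ :=
    dr_coco f f' β hβ0 hfconv' hsm u v
  have mono := dr_mono σ β f f' hsc u v
  rcases eq_or_lt_of_le hβσ with hEq | hLt
  · -- σ = β
    subst hEq
    have h1 := hsm u v
    have h2 := hsm v u
    have e1 : ⟪f' u, v - u⟫ = -⟪f' u, u - v⟫ := by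
      rw [← inner_neg_right]; congr 1; abel
    rw [e1, norm_sub_rev v u] at h2
    have tle : ⟪f' u - f' v, u - v⟫ ≤ σ * ‖u - v‖^2 := by
      rw [inner_sub_left]; linarith
    have hte : ⟪f' u - f' v, u - v⟫ = σ * ‖u - v‖^2 := le_antisymm tle mono
    have hsq : σ*σ*‖u - v‖^2 = σ*⟪f' u - f' v, u - v⟫ := by rw [hte]; ring
    linarith [cocoF, hsq]
  · -- σ < β : cocoercivity of f - σ/2‖·‖²
    have hnid : ∀ x y : H, ‖x‖^2 = ‖y‖^2 + 2*⟪y, x - y⟫ + ‖x - y‖^2 := by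
      intro x y
      have h := norm_add_sq_real y (x - y)
      rw [show y + (x - y) = x by abel] at h
      linarith [h]
    have hip : ∀ x y : H, ⟪f' y - σ • y, x - y⟫ = ⟪f' y, x - y⟫ - σ*⟪y, x - y⟫ := by
      intro x y
      rw [inner_sub_left, real_inner_smul_left]
    have hconvφ : ∀ x y : H, (f y - σ/2*‖y‖^2) + ⟪f' y - σ • y, x - y⟫
        ≤ f x - σ/2*‖x‖^2 := by
      intro x y
      rw [hip]
      have h2 : σ/2*‖x‖^2 = σ/2*‖y‖^2 + σ*⟪y, x - y⟫ + σ/2*‖x - y‖^2 := by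
        rw [hnid x y]; ring
      linarith [hsc x y, h2]
    have hsmφ : ∀ x y : H, f x - σ/2*‖x‖^2 ≤ (f y - σ/2*‖y‖^2) + ⟪f' y - σ • y, x - y⟫
        + (β - σ)/2 * ‖x - y‖^2 := by
      intro x y
      rw [hip]
      have h2 : σ/2*‖x‖^2 = σ/2*‖y‖^2 + σ*⟪y, x - y⟫ + σ/2*‖x - y‖^2 := by
        rw [hnid x y]; ring
      linarith [hsm x y, h2]
    have hco := dr_coco (fun x => f x - σ/2*‖x‖^2) (fun x => f' x - σ • x) (β - σ)
      (by linarith) hconvφ hsmφ u v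
    have hpe : (f' u - σ • u) - (f' v - σ • v) = (f' u - f' v) - σ • (u - v) := by module
    rw [hpe] at hco
    have hn1 : ‖(f' u - f' v) - σ • (u - v)‖^2
        = ‖f' u - f' v‖^2 - 2*σ*⟪f' u - f' v, u - v⟫ + σ^2*‖u - v‖^2 := by
      rw [norm_sub_sq_real, real_inner_smul_right, norm_smul, mul_pow,
        Real.norm_eq_abs, sq_abs]
      ring
    have hn2 : ⟪(f' u - f' v) - σ • (u - v), u - v⟫
        = ⟪f' u - f' v, u - v⟫ - σ*‖u - v‖^2 := by
      rw [inner_sub_left, real_inner_smul_left, real_inner_self_eq_norm_sq]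
    rw [hn1, hn2] at hco
    nlinarith [hco]

private lemma dr_opt (γ β σ : ℝ) (hγ : 0 < γ) (hσ : 0 < σ) (hβσ : σ ≤ β)
    (f : H → ℝ) (f' : H → H)
    (hsc : ∀ x y, f x ≥ f y + ⟪f' y, x - y⟫ + σ / 2 * ‖x - y‖ ^ 2)
    (hsm : ∀ x y, f x ≤ f y + ⟪f' y, x - y⟫ + β / 2 * ‖x - y‖ ^ 2)
    (pf : H → H)
    (hpf : ∀ y x, γ * f (pf y) + (1 / 2) * ‖pf y - y‖ ^ 2 ≤ γ * f x + (1 / 2) * ‖x - y‖ ^ 2)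
    (y : H) : y - pf y = γ • f' (pf y) := by
  have hβ0 : 0 < β := lt_of_lt_of_le hσ hβσ
  have hfconv : ∀ x y : H, ∀ t : ℝ, 0 ≤ t → t ≤ 1 →
      f (t • x + (1 - t) • y) ≤ t * f x + (1 - t) * f y := by
    intro x y t ht0 ht1
    set m := t • x + (1 - t) • y with hm
    have h1 := hsc x m
    have h2 := hsc y m
    have hv : t • (x - m) + (1 - t) • (y - m) = (0:H) := by
      rw [hm]; module
    have hi : t * ⟪f' m, x - m⟫ + (1 - t) * ⟪f' m, y - m⟫ = 0 := by
      rw [← real_inner_smul_right, ← real_inner_smul_right, ← inner_add_right, hv,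
        inner_zero_right]
    nlinarith [mul_le_mul_of_nonneg_left h1 ht0,
      mul_le_mul_of_nonneg_left h2 (by linarith : (0:ℝ) ≤ 1 - t),
      mul_nonneg ht0 (mul_nonneg (by linarith : (0:ℝ) ≤ σ/2) (sq_nonneg ‖x - m‖)),
      mul_nonneg (by linarith : (0:ℝ) ≤ 1 - t)
        (mul_nonneg (by linarith : (0:ℝ) ≤ σ/2) (sq_nonneg ‖y - m‖))]
  have hvi_f := dr_prox_vi γ hγ f hfconv pf hpf
  set q := pf y with hq
  set v : H := (y - q) - γ • f' q with hv
  have hkey : ∀ x : H, ⟪v, x - q⟫ ≤ γ*β/2 * ‖x - q‖^2 := by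
    intro x
    have h1 := hvi_f y x
    have h2 := hsm x q
    have h2' : γ * f x ≤ γ * f q + γ*⟪f' q, x - q⟫ + γ*(β/2*‖x-q‖^2) := by
      nlinarith [h2]
    have e : ⟪v, x - q⟫ = ⟪y - q, x - q⟫ - γ*⟪f' q, x - q⟫ := by
      rw [hv, inner_sub_left, real_inner_smul_left]
    rw [e]; nlinarith [h1, h2']
  have hv0 : v = 0 := by
    have hc : (0:ℝ) < 1/(γ*β) := by positivity
    have h := hkey (q + (1/(γ*β)) • v)
    rw [add_sub_cancel_left, real_inner_smul_right, real_inner_self_eq_norm_sq,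
      norm_smul, mul_pow, Real.norm_eq_abs, sq_abs] at h
    have hhalf : γ*β/2 * ((1/(γ*β))^2*‖v‖^2) = 1/(γ*β)*‖v‖^2/2 := by field_simp
    have hN : ‖v‖^2 ≤ 0 := by nlinarith [h, hhalf, sq_nonneg ‖v‖]
    have : ‖v‖ = 0 := by nlinarith [norm_nonneg v, sq_nonneg ‖v‖]
    exact norm_eq_zero.mp this
  rw [hv] at hv0
  exact sub_eq_zero.mp hv0

private lemma dr_Rf_contract (γ β σ δ : ℝ) (hγ : 0 < γ) (hσ : 0 < σ) (hβσ : σ ≤ β)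
    (hδ0 : 0 ≤ δ)
    (Es : (1+γ^2*σ^2)*(1-δ^2) ≤ 2*γ*σ*(1+δ^2))
    (Ea : (1+γ^2*β^2)*(1-δ^2) ≤ 2*γ*β*(1+δ^2))
    (f : H → ℝ) (f' : H → H)
    (hsc : ∀ x y, f x ≥ f y + ⟪f' y, x - y⟫ + σ / 2 * ‖x - y‖ ^ 2)
    (hsm : ∀ x y, f x ≤ f y + ⟪f' y, x - y⟫ + β / 2 * ‖x - y‖ ^ 2)
    (pf : H → H)
    (hpf : ∀ y x, γ * f (pf y) + (1 / 2) * ‖pf y - y‖ ^ 2 ≤ γ * f x + (1 / 2) * ‖x - y‖ ^ 2)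
    (z w : H) : ‖((2:ℝ) • pf z - z) - ((2:ℝ) • pf w - w)‖ ≤ δ * ‖z - w‖ := by
  have hβ0 : 0 < β := lt_of_lt_of_le hσ hβσ
  have h1 := dr_opt γ β σ hγ hσ hβσ f f' hsc hsm pf hpf z
  have h2 := dr_opt γ β σ hγ hσ hβσ f f' hsc hsm pf hpf w
  set u := pf z with hu
  set v := pf w with hvw
  set d : H := u - v with hd
  set e : H := f' u - f' v with he
  have hzw : z - w = d + γ • e := by
    have h3 : z - w = (z - u) - (w - v) + (u - v) := by abel
    rw [h3, h1, h2, hd, he]; module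
  have hr : ((2:ℝ) • u - z) - ((2:ℝ) • v - w) = d - γ • e := by
    have h3 : ((2:ℝ) • u - z) - ((2:ℝ) • v - w) = (u - v) - ((z - u) - (w - v)) := by
      module
    rw [h3, h1, h2, hd, he]; module
  have mono : σ * ‖d‖^2 ≤ ⟪e, d⟫ := by
    have := dr_mono σ β f f' hsc u v
    rw [← hd, ← he] at this; exact this
  have interp : ‖e‖^2 + σ*β*‖d‖^2 ≤ (σ+β)*⟪e, d⟫ := by
    have := dr_interp σ β hσ hβσ f f' hsc hsm u v
    rw [← hd, ← he] at this; exact this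
  have cauchy : ⟪e, d⟫ ≤ ‖e‖ * ‖d‖ := real_inner_le_norm e d
  have hfconv' : ∀ x y : H, f y + ⟪f' y, x - y⟫ ≤ f x := by
    intro x y
    have h := hsc x y
    have h2 : 0 ≤ σ/2 * ‖x - y‖^2 := by positivity
    linarith
  have cocoF : ‖e‖^2 ≤ β * ⟪e, d⟫ := by
    have := dr_coco f f' β hβ0 hfconv' hsm u v
    rw [← hd, ← he] at this; exact this
  have hY2 : ‖e‖^2 ≤ β^2 * ‖d‖^2 := by
    by_cases hE : ‖e‖ = 0
    · rw [hE]
      norm_num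
      positivity
    · have he0 : 0 < ‖e‖ := lt_of_le_of_ne (norm_nonneg e) (Ne.symm hE)
      have hb1 : ‖e‖^2 ≤ β * (‖e‖ * ‖d‖) := le_trans cocoF
        (mul_le_mul_of_nonneg_left cauchy (le_of_lt hβ0))
      have hb2 : ‖e‖ ≤ β * ‖d‖ := by
        have := mul_le_mul_of_nonneg_left hb1 (le_of_lt (one_div_pos.mpr he0))
        have hinv : (1/‖e‖) * ‖e‖ = 1 := by field_simp
        nlinarith [this, hinv]
      nlinarith [hb2, norm_nonneg e, norm_nonneg d]
  have hY1 : σ^2 * ‖d‖^2 ≤ ‖e‖^2 := by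
    by_cases hD : ‖d‖ = 0
    · rw [hD]; nlinarith [sq_nonneg ‖e‖]
    · have hd0 : 0 < ‖d‖ := lt_of_le_of_ne (norm_nonneg d) (Ne.symm hD)
      have hb1 : σ * ‖d‖^2 ≤ ‖e‖ * ‖d‖ := le_trans mono cauchy
      have hb2 : σ * ‖d‖ ≤ ‖e‖ := by
        have := mul_le_mul_of_nonneg_left hb1 (le_of_lt (one_div_pos.mpr hd0))
        have hinv : (1/‖d‖) * ‖d‖ = 1 := by field_simp
        nlinarith [this, hinv]
      nlinarith [hb2, norm_nonneg e, norm_nonneg d, hσ]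
  have key := dr_key_real γ σ β δ (‖d‖^2) (‖e‖^2) (⟪e, d⟫) hγ hσ hβσ (sq_nonneg _)
    interp hY1 hY2 Es Ea
  have n1 : ‖d - γ • e‖^2 = ‖d‖^2 - 2*γ*⟪e, d⟫ + γ^2*‖e‖^2 := by
    rw [norm_sub_sq_real, real_inner_smul_right, real_inner_comm d e,
      norm_smul, mul_pow, Real.norm_eq_abs, sq_abs]
    ring
  have n2 : ‖d + γ • e‖^2 = ‖d‖^2 + 2*γ*⟪e, d⟫ + γ^2*‖e‖^2 := by
    rw [norm_add_sq_real, real_inner_smul_right, real_inner_comm d e]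
    rw [norm_smul, mul_pow, Real.norm_eq_abs, sq_abs]
    ring
  rw [hr, hzw]
  exact dr_sqrt_step _ δ _ hδ0 (norm_nonneg _) (by nlinarith [key, n1, n2])

private lemma dr_Rg_nonexp (γ : ℝ) (hγ : 0 < γ) (g : H → ℝ)
    (hg_conv : ConvexOn ℝ Set.univ g)
    (pg : H → H)
    (hpg : ∀ y x, γ * g (pg y) + (1 / 2) * ‖pg y - y‖ ^ 2 ≤ γ * g x + (1 / 2) * ‖x - y‖ ^ 2)
    (a b : H) : ‖((2:ℝ) • pg a - a) - ((2:ℝ) • pg b - b)‖ ≤ ‖a - b‖ := by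
  have hgconv : ∀ x y : H, ∀ t : ℝ, 0 ≤ t → t ≤ 1 →
      g (t • x + (1 - t) • y) ≤ t * g x + (1 - t) * g y := by
    intro x y t ht0 ht1
    exact hg_conv.2 (Set.mem_univ x) (Set.mem_univ y) ht0 (by linarith) (by ring)
  have hvi_g := dr_prox_vi γ hγ g hgconv pg hpg
  have firm : ‖pg a - pg b‖^2 ≤ ⟪pg a - pg b, a - b⟫ := by
    have h1 := hvi_g a (pg b)
    have h2 := hvi_g b (pg a)
    have e1 : ⟪a - pg a, pg b - pg a⟫ = -⟪a - pg a, pg a - pg b⟫ := by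
      rw [← inner_neg_right]; congr 1; abel
    rw [e1] at h1
    have hsum : ⟪b - pg b, pg a - pg b⟫ - ⟪a - pg a, pg a - pg b⟫ ≤ 0 := by linarith
    have e2 : ⟪b - pg b, pg a - pg b⟫ - ⟪a - pg a, pg a - pg b⟫
        = ⟪(pg a - pg b) - (a - b), pg a - pg b⟫ := by
      rw [← inner_sub_left]
      congr 1
      abel
    rw [e2, inner_sub_left, real_inner_self_eq_norm_sq] at hsum
    rw [real_inner_comm] at hsum
    linarith
  have hvec : ((2:ℝ) • pg a - a) - ((2:ℝ) • pg b - b)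
      = (2:ℝ) • (pg a - pg b) - (a - b) := by module
  have hsq : ‖(2:ℝ) • (pg a - pg b) - (a - b)‖^2 ≤ ‖a - b‖^2 := by
    rw [norm_sub_sq_real, real_inner_smul_left, norm_smul]
    have h2 : ‖(2:ℝ)‖ = 2 := by norm_num
    rw [h2]
    nlinarith [firm]
  rw [hvec]
  have := dr_sqrt_step ‖(2:ℝ) • (pg a - pg b) - (a - b)‖ 1 ‖a - b‖ zero_le_one
    (norm_nonneg _) (by rw [one_pow, one_mul]; exact hsq)
  rw [one_mul] at this
  exact this

end dr_aux2

/-- Global linear convergence of Douglas–Rachford splitting when `f` is `σ`-strongly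
convex and `β`-smooth and `g` is convex: with
`δ = max((γβ−1)/(γβ+1), (1−γσ)/(1+γσ))` and `α ∈ (0, 2/(1+δ))`, the Douglas–Rachford
operator `T = (1−α)Id + α R_g∘R_f` contracts towards any fixed point `z̄` of `R_g∘R_f`
with factor `|1−α| + αδ < 1`, and the iterates converge linearly. -/
theorem douglasRachford_linear_convergence
    {H : Type*} [NormedAddCommGroup H] [InnerProductSpace ℝ H] [CompleteSpace H]
    (γ β σ : ℝ) (hγ : 0 < γ) (hσ : 0 < σ) (hβσ : σ ≤ β)
    (f : H → ℝ) (f' : H → H) (hf' : ∀ x, HasGradientAt f (f' x) x)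
    (hsc : ∀ x y, f x ≥ f y + ⟪f' y, x - y⟫ + σ / 2 * ‖x - y‖ ^ 2)
    (hsm : ∀ x y, f x ≤ f y + ⟪f' y, x - y⟫ + β / 2 * ‖x - y‖ ^ 2)
    (g : H → ℝ) (hg_conv : ConvexOn ℝ Set.univ g) (hg_cont : Continuous g)
    (pf : H → H)
    (hpf : ∀ y x, γ * f (pf y) + (1 / 2) * ‖pf y - y‖ ^ 2 ≤ γ * f x + (1 / 2) * ‖x - y‖ ^ 2)
    (pg : H → H)
    (hpg : ∀ y x, γ * g (pg y) + (1 / 2) * ‖pg y - y‖ ^ 2 ≤ γ * g x + (1 / 2) * ‖x - y‖ ^ 2)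
    (Rf : H → H) (hRf : Rf = fun x => (2 : ℝ) • pf x - x)
    (Rg : H → H) (hRg : Rg = fun x => (2 : ℝ) • pg x - x)
    (δ : ℝ) (hδ : δ = max ((γ * β - 1) / (γ * β + 1)) ((1 - γ * σ) / (1 + γ * σ)))
    (α : ℝ) (hα₁ : 0 < α) (hα₂ : α < 2 / (1 + δ))
    (T : H → H) (hT : T = fun z => (1 - α) • z + α • Rg (Rf z))
    (zbar : H) (hzbar : Rg (Rf zbar) = zbar) :
    (∀ z, ‖T z - zbar‖ ≤ (|1 - α| + α * δ) * ‖z - zbar‖)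
      ∧ |1 - α| + α * δ < 1
      ∧ ∀ z : ℕ → H, (∀ k, z (k + 1) = T (z k)) →
          ∀ k, ‖z k - zbar‖ ≤ (|1 - α| + α * δ) ^ k * ‖z 0 - zbar‖ := by
  have hβ0 : 0 < β := lt_of_lt_of_le hσ hβσ
  have hgs : 0 < γ * σ := by positivity
  have hgb : 0 < γ * β := by positivity
  have hgsb : γ * σ ≤ γ * β := mul_le_mul_of_nonneg_left hβσ (le_of_lt hγ)
  have hδ1' : (γ*β-1)/(γ*β+1) ≤ δ := by rw [hδ]; exact le_max_left _ _
  have hδ2' : (1-γ*σ)/(1+γ*σ) ≤ δ := by rw [hδ]; exact le_max_right _ _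
  have hδa2 : (1-γ*β)/(1+γ*β) ≤ δ := by
    refine le_trans ?_ hδ2'
    rw [div_le_div_iff₀ (by linarith) (by linarith)]
    nlinarith
  have hδs1 : (γ*σ-1)/(γ*σ+1) ≤ δ := by
    refine le_trans ?_ hδ1'
    rw [div_le_div_iff₀ (by linarith) (by linarith)]
    nlinarith
  have hδ0 : 0 ≤ δ := by
    rcases le_or_gt 1 (γ*β) with h | h
    · exact le_trans (div_nonneg (by linarith) (by linarith)) hδ1'
    · exact le_trans (div_nonneg (by linarith) (by linarith)) hδ2'
  have hδlt1 : δ < 1 := by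
    rw [hδ]
    apply max_lt
    · rw [div_lt_one (by linarith)]; linarith
    · rw [div_lt_one (by linarith)]; linarith
  have Ea : (1+γ^2*β^2)*(1-δ^2) ≤ 2*γ*β*(1+δ^2) := by
    have h := dr_delta_ineq (γ*β) δ hgb hδ1' hδa2
    ring_nf at h ⊢
    linarith
  have Es : (1+γ^2*σ^2)*(1-δ^2) ≤ 2*γ*σ*(1+δ^2) := by
    have h := dr_delta_ineq (γ*σ) δ hgs hδs1 hδ2'
    ring_nf at h ⊢
    linarith
  have hRfc := dr_Rf_contract γ β σ δ hγ hσ hβσ hδ0 Es Ea f f' hsc hsm pf hpf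
  have hRgc := dr_Rg_nonexp γ hγ g hg_conv pg hpg
  set ρ := |1 - α| + α * δ with hρ
  have hρ0 : 0 ≤ ρ := by
    rw [hρ]
    have := abs_nonneg (1 - α)
    nlinarith [mul_nonneg (le_of_lt hα₁) hδ0]
  have hαδ : α * (1 + δ) < 2 := by
    rw [lt_div_iff₀ (by linarith : (0:ℝ) < 1 + δ)] at hα₂
    linarith
  have part2 : ρ < 1 := by
    rw [hρ]
    rcases le_or_gt α 1 with h | h
    · rw [abs_of_nonneg (by linarith : (0:ℝ) ≤ 1 - α)]
      nlinarith [hα₁, hδlt1]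
    · rw [abs_of_neg (by linarith : (1:ℝ) - α < 0)]
      nlinarith [hαδ]
  have part1 : ∀ z, ‖T z - zbar‖ ≤ ρ * ‖z - zbar‖ := by
    intro z
    have e1 : T z - zbar = (1 - α) • (z - zbar) + α • (Rg (Rf z) - zbar) := by
      rw [hT]; simp only; module
    rw [e1]
    have h1 : ‖(1 - α) • (z - zbar) + α • (Rg (Rf z) - zbar)‖
        ≤ ‖(1 - α) • (z - zbar)‖ + ‖α • (Rg (Rf z) - zbar)‖ := norm_add_le _ _
    rw [norm_smul, norm_smul, Real.norm_eq_abs, Real.norm_eq_abs,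
      abs_of_pos hα₁] at h1
    have h2 : ‖Rg (Rf z) - zbar‖ ≤ δ * ‖z - zbar‖ := by
      calc ‖Rg (Rf z) - zbar‖ = ‖Rg (Rf z) - Rg (Rf zbar)‖ := by rw [hzbar]
        _ ≤ ‖Rf z - Rf zbar‖ := by
            rw [hRg]; exact hRgc (Rf z) (Rf zbar)
        _ ≤ δ * ‖z - zbar‖ := by
            rw [hRf]; exact hRfc z zbar
    have h3 : α * ‖Rg (Rf z) - zbar‖ ≤ α * (δ * ‖z - zbar‖) :=
      mul_le_mul_of_nonneg_left h2 (le_of_lt hα₁)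
    rw [hρ]
    calc ‖(1 - α) • (z - zbar) + α • (Rg (Rf z) - zbar)‖
        ≤ |1 - α| * ‖z - zbar‖ + α * ‖Rg (Rf z) - zbar‖ := h1
      _ ≤ |1 - α| * ‖z - zbar‖ + α * (δ * ‖z - zbar‖) := by linarith
      _ = (|1 - α| + α * δ) * ‖z - zbar‖ := by ring
  refine ⟨part1, part2, ?_⟩
  intro z hz k
  induction k with
  | zero => simp
  | succ k ih =>
      rw [hz k]
      calc ‖T (z k) - zbar‖ ≤ ρ * ‖z k - zbar‖ := part1 (z k)
        _ ≤ ρ * (ρ ^ k * ‖z 0 - zbar‖) := mul_le_mul_of_nonneg_left ih hρ0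
        _ = ρ ^ (k + 1) * ‖z 0 - zbar‖ := by ring
end

section
/- Let H be a real Hilbert space, let γ > 0 and β ≥ σ > 0. Let f : H → ℝ be differentiable, σ-strongly convex and β-smooth, and let g : H → ℝ be convex and continuous, with proximal operators p_f = prox_{γf} and p_g = prox_{γg}, reflected proximal operators R_f = 2p_f − Id and R_g = 2p_g − Id, and δ := max((γβ − 1)/(γβ + 1), (1 − γσ)/(1 + γσ)). Let α ∈ (0, 2/(1+δ)), let z̄ be a fixed point of R_g ∘ R_f, and let z^{k+1} = (1 − α)z^k + α·R_g(R_f(z^k)) be the Douglas–Rachford iterates from an initial point z^0. Set x^k := p_f(z^k) and x* := p_f(z̄). Then for all k ≥ 0: ‖x^k − x*‖ ≤ (|1 − α| + δ·α)^k · (1/(1 + γσ)) · ‖z^0 − z̄‖ (R-linear convergence of the x-iterates). -/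
open scoped RealInnerProductSpace


section Aux
variable {H : Type*} [NormedAddCommGroup H] [InnerProductSpace ℝ H]

private lemma norm_add_smul_sq (a w : H) (s : ℝ) :
    ‖a + s • w‖ ^ 2 = ‖a‖ ^ 2 + 2 * s * ⟪a, w⟫ + s ^ 2 * ‖w‖ ^ 2 := by
  rw [norm_add_sq_real, real_inner_smul_right, norm_smul, Real.norm_eq_abs, mul_pow, sq_abs]
  ring

private lemma norm_le_of_sq_le_sq {x : H} {D : ℝ} (hD : 0 ≤ D) (h : ‖x‖ ^ 2 ≤ D ^ 2) :
    ‖x‖ ≤ D := by nlinarith [norm_nonneg x]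

private lemma prox_vi (γ : ℝ) (hγ : 0 < γ) (h : H → ℝ)
    (hconv : ∀ x y : H, ∀ t : ℝ, 0 ≤ t → t ≤ 1 →
      h (x + t • (y - x)) ≤ (1 - t) * h x + t * h y)
    (p : H → H)
    (hp : ∀ y x, γ * h (p y) + (1 / 2) * ‖p y - y‖ ^ 2 ≤ γ * h x + (1 / 2) * ‖x - y‖ ^ 2)
    (u z : H) : 0 ≤ γ * (h z - h (p u)) + ⟪p u - u, z - p u⟫ := by
  have key : ∀ t : ℝ, 0 < t → t ≤ 1 →
      0 ≤ (γ * (h z - h (p u)) + ⟪p u - u, z - p u⟫) + t * ((1 / 2) * ‖z - p u‖ ^ 2) := by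
    intro t ht0 ht1
    have h1 := hp u (p u + t • (z - p u))
    have h3 : ‖p u + t • (z - p u) - u‖ ^ 2
        = ‖p u - u‖ ^ 2 + 2 * t * ⟪p u - u, z - p u⟫ + t ^ 2 * ‖z - p u‖ ^ 2 := by
      rw [add_sub_right_comm, norm_add_smul_sq]
    rw [h3] at h1
    have h4 : γ * h (p u + t • (z - p u)) ≤ γ * ((1 - t) * h (p u) + t * h z) :=
      mul_le_mul_of_nonneg_left (hconv (p u) z t ht0.le ht1) hγ.le
    have h6 : 0 ≤ t * ((γ * (h z - h (p u)) + ⟪p u - u, z - p u⟫)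
        + t * ((1 / 2) * ‖z - p u‖ ^ 2)) := by nlinarith [h1, h4]
    exact nonneg_of_mul_nonneg_right h6 ht0
  have lim : Filter.Tendsto
      (fun t : ℝ => (γ * (h z - h (p u)) + ⟪p u - u, z - p u⟫) + t * ((1 / 2) * ‖z - p u‖ ^ 2))
      (nhdsWithin 0 (Set.Ioi 0)) (nhds (γ * (h z - h (p u)) + ⟪p u - u, z - p u⟫)) := by
    have hc : Continuous
        (fun t : ℝ => (γ * (h z - h (p u)) + ⟪p u - u, z - p u⟫) + t * ((1 / 2) * ‖z - p u‖ ^ 2)) := by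
      continuity
    simpa using (hc.tendsto 0).mono_left nhdsWithin_le_nhds
  refine ge_of_tendsto lim ?_
  filter_upwards [Ioc_mem_nhdsGT_of_mem (by constructor <;> norm_num : (0:ℝ) ∈ Set.Ico 0 1)]
    with t ht using key t ht.1 ht.2

set_option maxHeartbeats 1000000 in
private lemma keyreal (s t A B c δ : ℝ) (hs : 0 < s) (hst : s ≤ t)
    (hA : 0 ≤ A) (hB : 0 ≤ B)
    (h1 : s * A ≤ c) (h2 : s * t * A + B ≤ (s + t) * c) (h3 : c ^ 2 ≤ A * B)
    (hδ1 : (t - 1) / (t + 1) ≤ δ) (hδ2 : (1 - s) / (1 + s) ≤ δ) (hδ0 : 0 ≤ δ) :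
    A - 2 * c + B ≤ δ ^ 2 * (A + 2 * c + B) := by
  have ht : 0 < t := lt_of_lt_of_le hs hst
  have hc : 0 ≤ c := le_trans (by positivity) h1
  rcases le_or_gt 1 δ with hδg | hδg
  · have h1δ : (1:ℝ) ≤ δ ^ 2 := by nlinarith
    nlinarith [mul_le_mul_of_nonneg_right h1δ (show (0:ℝ) ≤ A + 2 * c + B by linarith)]
  have hδsq : δ ^ 2 ≤ 1 := by nlinarith
  rcases le_or_gt (s * t) 1 with hst1 | hst1
  · have hs1 : s ≤ 1 := by nlinarith
    have hABc : s * (A + B) ≤ (s * s + 1) * c := by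
      nlinarith [mul_le_mul_of_nonneg_left h2 hs.le,
        mul_le_mul_of_nonneg_left h1 (by linarith : (0:ℝ) ≤ 1 - s * t)]
    have h4 : (1 - s) ^ 2 ≤ δ ^ 2 * (1 + s) ^ 2 := by
      have h0 : 0 ≤ (1 - s) / (1 + s) := div_nonneg (by linarith) (by linarith)
      have := pow_le_pow_left₀ h0 hδ2 2
      rw [div_pow, div_le_iff₀ (by positivity)] at this
      linarith [this]
    nlinarith [mul_nonneg (sub_nonneg.2 hABc) (sub_nonneg.2 hδsq),
      mul_nonneg (sub_nonneg.2 h4) hc, hs.le]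
  · have ht1 : 1 ≤ t := by nlinarith
    have hq : (c - s * A) * (c - t * A) ≤ 0 := by
      nlinarith [h3, mul_le_mul_of_nonneg_left h2 hA]
    have htAc : c ≤ t * A := by
      by_contra hlt
      push_neg at hlt
      nlinarith [hq, mul_nonneg (sub_nonneg.2 hst) hA]
    have hABc : t * (A + B) ≤ (t * t + 1) * c := by
      nlinarith [mul_le_mul_of_nonneg_left h2 ht.le,
        mul_le_mul_of_nonneg_left htAc (by nlinarith : (0:ℝ) ≤ s * t - 1)]
    have h4 : (t - 1) ^ 2 ≤ δ ^ 2 * (1 + t) ^ 2 := by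
      have h0 : 0 ≤ (t - 1) / (t + 1) := div_nonneg (by linarith) (by linarith)
      have := pow_le_pow_left₀ h0 hδ1 2
      rw [div_pow, div_le_iff₀ (by positivity)] at this
      nlinarith [this]
    have P1 : 0 ≤ ((t * t + 1) * c - t * (A + B)) * (1 - δ ^ 2) :=
      mul_nonneg (by linarith) (by linarith)
    have P2 : 0 ≤ (δ ^ 2 * (1 + t) ^ 2 - (t - 1) ^ 2) * c := mul_nonneg (by linarith) hc
    have key : 0 ≤ t * (δ ^ 2 * (A + 2 * c + B) - (A - 2 * c + B)) := by linarith [P1, P2]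
    nlinarith [nonneg_of_mul_nonneg_right key ht]

end Aux

set_option maxHeartbeats 4000000 in
/-- R-linear convergence of the `x`-iterates `x^k = prox_{γf}(z^k)` of the
Douglas–Rachford algorithm towards `x* = prox_{γf}(z̄)`. -/
theorem douglasRachford_x_iterates_linear_convergence
    {H : Type*} [NormedAddCommGroup H] [InnerProductSpace ℝ H] [CompleteSpace H]
    (γ β σ : ℝ) (hγ : 0 < γ) (hσ : 0 < σ) (hβσ : σ ≤ β)
    (f : H → ℝ) (f' : H → H) (hf' : ∀ x, HasGradientAt f (f' x) x)
    (hsc : ∀ x y, f x ≥ f y + ⟪f' y, x - y⟫ + σ / 2 * ‖x - y‖ ^ 2)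
    (hsm : ∀ x y, f x ≤ f y + ⟪f' y, x - y⟫ + β / 2 * ‖x - y‖ ^ 2)
    (g : H → ℝ) (hg_conv : ConvexOn ℝ Set.univ g) (hg_cont : Continuous g)
    (pf : H → H)
    (hpf : ∀ y x, γ * f (pf y) + (1 / 2) * ‖pf y - y‖ ^ 2 ≤ γ * f x + (1 / 2) * ‖x - y‖ ^ 2)
    (pg : H → H)
    (hpg : ∀ y x, γ * g (pg y) + (1 / 2) * ‖pg y - y‖ ^ 2 ≤ γ * g x + (1 / 2) * ‖x - y‖ ^ 2)
    (Rf : H → H) (hRf : Rf = fun x => (2 : ℝ) • pf x - x)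
    (Rg : H → H) (hRg : Rg = fun x => (2 : ℝ) • pg x - x)
    (δ : ℝ) (hδ : δ = max ((γ * β - 1) / (γ * β + 1)) ((1 - γ * σ) / (1 + γ * σ)))
    (α : ℝ) (hα₁ : 0 < α) (hα₂ : α < 2 / (1 + δ))
    (zbar : H) (hzbar : Rg (Rf zbar) = zbar)
    (z : ℕ → H) (hz : ∀ k, z (k + 1) = (1 - α) • z k + α • Rg (Rf (z k))) :
    ∀ k, ‖pf (z k) - pf zbar‖ ≤
      (|1 - α| + δ * α) ^ k * (1 / (1 + γ * σ)) * ‖z 0 - zbar‖ := by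
  have hβ : 0 < β := lt_of_lt_of_le hσ hβσ
  have hγσ : 0 < 1 + γ * σ := by positivity
  -- convexity of f along segments
  have hconvf : ∀ x y : H, ∀ t : ℝ, 0 ≤ t → t ≤ 1 →
      f (x + t • (y - x)) ≤ (1 - t) * f x + t * f y := by
    intro x y t ht0 ht1
    have h1 := hsc x (x + t • (y - x))
    have h2 := hsc y (x + t • (y - x))
    have e1 : x - (x + t • (y - x)) = (-t) • (y - x) := by module
    have e2 : y - (x + t • (y - x)) = (1 - t) • (y - x) := by module
    rw [e1, real_inner_smul_right, norm_smul, Real.norm_eq_abs] at h1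
    rw [e2, real_inner_smul_right, norm_smul, Real.norm_eq_abs] at h2
    have n1 : |(-t)| ^ 2 = t ^ 2 := by rw [sq_abs]; ring
    have n2 : |1 - t| ^ 2 = (1 - t) ^ 2 := sq_abs _
    rw [mul_pow, n1] at h1
    rw [mul_pow, n2] at h2
    nlinarith [mul_le_mul_of_nonneg_left h1.le (by linarith : (0:ℝ) ≤ 1 - t),
      mul_le_mul_of_nonneg_left h2.le ht0, hσ,
      mul_nonneg (mul_nonneg ht0 (by linarith : (0:ℝ) ≤ 1 - t)) (sq_nonneg ‖y - x‖),
      sq_nonneg ‖y - x‖]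
  have hconvg : ∀ x y : H, ∀ t : ℝ, 0 ≤ t → t ≤ 1 →
      g (x + t • (y - x)) ≤ (1 - t) * g x + t * g y := by
    intro x y t ht0 ht1
    have := hg_conv.2 (Set.mem_univ x) (Set.mem_univ y)
      (sub_nonneg.2 ht1) ht0 (by ring)
    rw [show x + t • (y - x) = (1 - t) • x + t • y by module]
    simpa [smul_eq_mul] using this
  have hvif := prox_vi γ hγ f hconvf pf hpf
  have hvig := prox_vi γ hγ g hconvg pg hpg
  -- optimality condition for pf
  have hopt : ∀ u, pf u + γ • f' (pf u) = u := by
    intro u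
    set w : H := u - pf u - γ • f' (pf u) with hw
    set r : ℝ := 1 / (γ * β) with hr
    have hrpos : 0 < r := by positivity
    have h1 := hvif u (pf u + r • w)
    have h2 := hsm (pf u + r • w) (pf u)
    have e : pf u + r • w - pf u = r • w := add_sub_cancel_left _ _
    rw [e] at h2
    rw [show pf u + r • w - pf u = r • w from e] at h1
    rw [real_inner_smul_right] at h1
    rw [real_inner_smul_right] at h2
    have hn : ‖r • w‖ ^ 2 = r ^ 2 * ‖w‖ ^ 2 := by
      rw [norm_smul, Real.norm_eq_abs, mul_pow, sq_abs]
    rw [hn] at h2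
    have hip : ⟪pf u - u, w⟫ + γ * ⟪f' (pf u), w⟫ = -‖w‖ ^ 2 := by
      have hh : (pf u - u) + γ • f' (pf u) = -w := by rw [hw]; module
      calc ⟪pf u - u, w⟫ + γ * ⟪f' (pf u), w⟫
          = ⟪(pf u - u) + γ • f' (pf u), w⟫ := by
            rw [inner_add_left, real_inner_smul_left]
        _ = ⟪-w, w⟫ := by rw [hh]
        _ = -‖w‖ ^ 2 := by rw [inner_neg_left, real_inner_self_eq_norm_sq]
    have h3 : γ * (f (pf u + r • w) - f (pf u))
        ≤ γ * (r * ⟪f' (pf u), w⟫ + β / 2 * (r ^ 2 * ‖w‖ ^ 2)) :=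
      mul_le_mul_of_nonneg_left (by linarith) hγ.le
    have hr2 : γ * (β / 2 * (r ^ 2 * ‖w‖ ^ 2)) = r / 2 * ‖w‖ ^ 2 := by
      rw [hr]; field_simp
    have hfin : r / 2 * ‖w‖ ^ 2 ≤ 0 := by nlinarith [h1, h3, hip, hr2]
    have hw0 : w = 0 := by
      have hW : ‖w‖ ^ 2 ≤ 0 := by
        have h9 : r * ‖w‖ ^ 2 ≤ r * 0 := by linarith [hfin]
        exact le_of_mul_le_mul_left h9 hrpos
      have h0 : ‖w‖ ^ 2 = 0 := le_antisymm hW (by positivity)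
      exact norm_eq_zero.mp (pow_eq_zero_iff two_ne_zero |>.mp h0)
    have : u - pf u - γ • f' (pf u) = 0 := by rw [← hw, hw0]
    rw [sub_sub] at this
    exact (sub_eq_zero.mp this).symm
  -- strong monotonicity of the gradient
  have hmono : ∀ x y : H, σ * ‖x - y‖ ^ 2 ≤ ⟪f' x - f' y, x - y⟫ := by
    intro x y
    have h1 := hsc x y
    have h2 := hsc y x
    have e1 : ⟪f' x, y - x⟫ = -⟪f' x, x - y⟫ := by
      rw [show y - x = -(x - y) by abel, inner_neg_right]
    have e2 : ‖y - x‖ = ‖x - y‖ := norm_sub_rev _ _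
    rw [e1, e2] at h2
    rw [inner_sub_left]
    nlinarith [h1, h2]
  -- interpolation inequality
  have hinterp : ∀ x y : H,
      σ * β * ‖x - y‖ ^ 2 + ‖f' x - f' y‖ ^ 2 ≤ (σ + β) * ⟪f' x - f' y, x - y⟫ := by
    intro x y
    set w : H := f' x - f' y - σ • (x - y) with hw
    have key : ∀ s : ℝ, 2 * s * ‖w‖ ^ 2 - (β - σ) * s ^ 2 * ‖w‖ ^ 2 ≤ ⟪w, x - y⟫ := by
      intro s
      have I1 := hsc (y + s • w) x
      have I2 := hsm (y + s • w) y
      have I3 := hsc (x - s • w) y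
      have I4 := hsm (x - s • w) x
      have e1 : y + s • w - x = (y - x) + s • w := by module
      have e2 : y + s • w - y = (0:H) + s • w := by module
      have e3 : x - s • w - y = (x - y) + (-s) • w := by module
      have e4 : x - s • w - x = (0:H) + (-s) • w := by module
      rw [e1] at I1; rw [e2] at I2; rw [e3] at I3; rw [e4] at I4
      rw [inner_add_right, real_inner_smul_right, norm_add_smul_sq] at I1 I2 I3 I4
      simp only [inner_zero_left, inner_zero_right, norm_zero, mul_zero, add_zero,
        zero_add] at I2 I4
      have c1 : ⟪f' x, y - x⟫ + ⟪f' y, x - y⟫ = -(⟪w, x - y⟫ + σ * ‖x - y‖ ^ 2) := by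
        have : f' x - f' y = w + σ • (x - y) := by rw [hw]; module
        have h0 : ⟪f' x - f' y, x - y⟫ = ⟪w, x - y⟫ + σ * ‖x - y‖ ^ 2 := by
          rw [this, inner_add_left, real_inner_smul_left, real_inner_self_eq_norm_sq]
        have h1 : ⟪f' x, y - x⟫ = -⟪f' x, x - y⟫ := by
          rw [show y - x = -(x - y) by abel, inner_neg_right]
        rw [inner_sub_left] at h0
        linarith [h0, h1]
      have c2 : ⟪f' x, w⟫ - ⟪f' y, w⟫ = ‖w‖ ^ 2 + σ * ⟪w, x - y⟫ := by
        have h0 : f' x - f' y = w + σ • (x - y) := by rw [hw]; module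
        have h5 : ⟪f' x - f' y, w⟫ = ‖w‖ ^ 2 + σ * ⟪x - y, w⟫ := by
          rw [h0, inner_add_left, real_inner_smul_left, real_inner_self_eq_norm_sq]
        have hcm : ⟪x - y, w⟫ = ⟪w, x - y⟫ := real_inner_comm _ _
        rw [inner_sub_left, hcm] at h5
        linarith [h5]
      have c3 : ⟪x - y, w⟫ = ⟪w, x - y⟫ := real_inner_comm _ _
      have c4 : ⟪y - x, w⟫ = -⟪w, x - y⟫ := by
        rw [show y - x = -(x - y) by abel, inner_neg_left, c3]
      have c5 : ‖y - x‖ = ‖x - y‖ := norm_sub_rev _ _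
      rw [c5, c4] at I1
      rw [c3] at I3
      have c2s : s * (⟪f' x, w⟫ - ⟪f' y, w⟫) = s * (‖w‖ ^ 2 + σ * ⟪w, x - y⟫) := by
        rw [c2]
      linarith [I1, I2, I3, I4, c1, c2s]
    have hch : ‖w‖ ^ 2 ≤ (β - σ) * ⟪w, x - y⟫ := by
      rcases eq_or_lt_of_le hβσ with heq | hlt
      · have hz : ∀ s : ℝ, 2 * s * ‖w‖ ^ 2 ≤ ⟪w, x - y⟫ := by
          intro s; have hks := key s; rw [← heq] at hks; linarith [hks]
        have hw0 : ‖w‖ ^ 2 ≤ 0 := by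
          by_contra hpos
          push_neg at hpos
          have hzz := hz ((⟪w, x - y⟫ + 1) / (2 * ‖w‖ ^ 2))
          have he : 2 * ((⟪w, x - y⟫ + 1) / (2 * ‖w‖ ^ 2)) * ‖w‖ ^ 2
              = ⟪w, x - y⟫ + 1 := by
              have hne : ‖w‖ ≠ 0 := fun h0 => by simp [h0] at hpos
              field_simp
          linarith [hzz, he]
        rw [← heq]
        nlinarith [hw0]
      · have hL : 0 < β - σ := by linarith
        have := key (1 / (β - σ))
        have e : 2 * (1 / (β - σ)) * ‖w‖ ^ 2 - (β - σ) * (1 / (β - σ)) ^ 2 * ‖w‖ ^ 2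
            = (1 / (β - σ)) * ‖w‖ ^ 2 := by field_simp; ring
        rw [e] at this
        rw [show (β - σ) * ⟪w, x - y⟫ = (β - σ) * ⟪w, x - y⟫ from rfl]
        calc ‖w‖ ^ 2 = (β - σ) * ((1 / (β - σ)) * ‖w‖ ^ 2) := by field_simp
          _ ≤ (β - σ) * ⟪w, x - y⟫ := mul_le_mul_of_nonneg_left this hL.le
    -- translate back
    have t1 : ⟪f' x - f' y, x - y⟫ = ⟪w, x - y⟫ + σ * ‖x - y‖ ^ 2 := by
      rw [show f' x - f' y = w + σ • (x - y) by rw [hw]; module,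
        inner_add_left, real_inner_smul_left, real_inner_self_eq_norm_sq]
    have t2 : ‖f' x - f' y‖ ^ 2
        = ‖w‖ ^ 2 + 2 * σ * ⟪w, x - y⟫ + σ ^ 2 * ‖x - y‖ ^ 2 := by
      rw [show f' x - f' y = w + σ • (x - y) by rw [hw]; module, norm_add_sq_real,
        real_inner_smul_right, norm_smul, Real.norm_eq_abs, mul_pow, sq_abs]
      ring
    rw [t1, t2]
    nlinarith [hch]
  -- basic facts about δ
  have hδ1 : (γ * β - 1) / (γ * β + 1) ≤ δ := hδ ▸ le_max_left _ _
  have hδ2 : (1 - γ * σ) / (1 + γ * σ) ≤ δ := hδ ▸ le_max_right _ _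
  have hδ0 : 0 ≤ δ := by
    rcases le_or_gt (γ * σ) 1 with h | h
    · exact le_trans (div_nonneg (by linarith) (by positivity)) hδ2
    · refine le_trans (div_nonneg ?_ (by positivity)) hδ1
      nlinarith [mul_le_mul_of_nonneg_left hβσ hγ.le]
  -- decomposition u - v = a + γ • d
  have huv : ∀ u v : H, u - v = (pf u - pf v) + γ • (f' (pf u) - f' (pf v)) := by
    intro u v
    conv_lhs => rw [← hopt u, ← hopt v]
    module
  -- Lipschitz property of pf
  have hlip : ∀ u v : H, (1 + γ * σ) * ‖pf u - pf v‖ ≤ ‖u - v‖ := by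
    intro u v
    have hm := hmono (pf u) (pf v)
    have hinner : (1 + γ * σ) * ‖pf u - pf v‖ ^ 2 ≤ ⟪u - v, pf u - pf v⟫ := by
      rw [huv u v, inner_add_left, real_inner_smul_left, real_inner_self_eq_norm_sq]
      nlinarith [mul_le_mul_of_nonneg_left hm hγ.le]
    have hcs : ⟪u - v, pf u - pf v⟫ ≤ ‖u - v‖ * ‖pf u - pf v‖ := real_inner_le_norm _ _
    rcases eq_or_lt_of_le (norm_nonneg (pf u - pf v)) with h0 | h0
    · rw [← h0, mul_zero]
      exact norm_nonneg _
    · have hh : (1 + γ * σ) * ‖pf u - pf v‖ * ‖pf u - pf v‖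
          ≤ ‖u - v‖ * ‖pf u - pf v‖ := by nlinarith [hinner, hcs]
      exact le_of_mul_le_mul_right hh h0
  -- contraction property of Rf
  have hcontr : ∀ u v : H, ‖Rf u - Rf v‖ ≤ δ * ‖u - v‖ := by
    intro u v
    have hRfe : Rf u - Rf v = (pf u - pf v) + (-γ) • (f' (pf u) - f' (pf v)) := by
      have h1 : Rf u - Rf v = (2 : ℝ) • (pf u - pf v) - (u - v) := by
        rw [hRf]; dsimp only; module
      rw [h1, huv u v]; module
    have hm := hmono (pf u) (pf v)
    have hi := hinterp (pf u) (pf v)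
    have hcauchy := real_inner_mul_inner_self_le (pf u - pf v) (f' (pf u) - f' (pf v))
    rw [real_inner_self_eq_norm_sq, real_inner_self_eq_norm_sq] at hcauchy
    have hcomm : ⟪f' (pf u) - f' (pf v), pf u - pf v⟫ = ⟪pf u - pf v, f' (pf u) - f' (pf v)⟫ :=
      real_inner_comm _ _
    rw [hcomm] at hm hi
    have key := keyreal (γ * σ) (γ * β) (‖pf u - pf v‖ ^ 2)
      (γ ^ 2 * ‖f' (pf u) - f' (pf v)‖ ^ 2) (γ * ⟪pf u - pf v, f' (pf u) - f' (pf v)⟫) δ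
      (by positivity) (mul_le_mul_of_nonneg_left hβσ hγ.le)
      (by positivity) (by positivity)
      (by nlinarith [mul_le_mul_of_nonneg_left hm hγ.le])
      (by nlinarith [mul_le_mul_of_nonneg_left hi (by positivity : (0:ℝ) ≤ γ ^ 2)])
      (by nlinarith [mul_le_mul_of_nonneg_left hcauchy (by positivity : (0:ℝ) ≤ γ ^ 2)])
      hδ1 hδ2 hδ0
    have e1 : ‖Rf u - Rf v‖ ^ 2 = ‖pf u - pf v‖ ^ 2
        - 2 * (γ * ⟪pf u - pf v, f' (pf u) - f' (pf v)⟫)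
        + γ ^ 2 * ‖f' (pf u) - f' (pf v)‖ ^ 2 := by
      rw [hRfe, norm_add_smul_sq]; ring
    have e2 : ‖u - v‖ ^ 2 = ‖pf u - pf v‖ ^ 2
        + 2 * (γ * ⟪pf u - pf v, f' (pf u) - f' (pf v)⟫)
        + γ ^ 2 * ‖f' (pf u) - f' (pf v)‖ ^ 2 := by
      rw [huv u v, norm_add_smul_sq]; ring
    refine norm_le_of_sq_le_sq (mul_nonneg hδ0 (norm_nonneg _)) ?_
    rw [mul_pow, e1]
    calc ‖pf u - pf v‖ ^ 2 - 2 * (γ * ⟪pf u - pf v, f' (pf u) - f' (pf v)⟫)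
          + γ ^ 2 * ‖f' (pf u) - f' (pf v)‖ ^ 2
        ≤ δ ^ 2 * (‖pf u - pf v‖ ^ 2 + 2 * (γ * ⟪pf u - pf v, f' (pf u) - f' (pf v)⟫)
          + γ ^ 2 * ‖f' (pf u) - f' (pf v)‖ ^ 2) := key
      _ = δ ^ 2 * ‖u - v‖ ^ 2 := by rw [e2]
  -- nonexpansiveness of Rg
  have hfirm : ∀ u v : H, ‖pg u - pg v‖ ^ 2 ≤ ⟪u - v, pg u - pg v⟫ := by
    intro u v
    have k1 := hvig u (pg v)
    have k2 := hvig v (pg u)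
    have iden : ⟪pg u - u, pg v - pg u⟫ + ⟪pg v - v, pg u - pg v⟫
        = ⟪u - v, pg u - pg v⟫ - ‖pg u - pg v‖ ^ 2 := by
      have hc1 : ⟪pg u, pg v⟫ = ⟪pg v, pg u⟫ := real_inner_comm _ _
      have hc2 : ⟪pg u - pg v, pg u - pg v⟫ = ‖pg u - pg v‖ ^ 2 :=
        real_inner_self_eq_norm_sq _
      rw [← hc2]
      simp only [inner_sub_left, inner_sub_right]
      linarith [hc1]
    linarith [k1, k2, iden]
  have hRgn : ∀ u v : H, ‖Rg u - Rg v‖ ≤ ‖u - v‖ := by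
    intro u v
    have hf := hfirm u v
    have e : Rg u - Rg v = -(u - v) + (2 : ℝ) • (pg u - pg v) := by
      rw [hRg]; dsimp only; module
    refine norm_le_of_sq_le_sq (norm_nonneg _) ?_
    rw [e, norm_add_smul_sq, norm_neg]
    have hni : ⟪-(u - v), pg u - pg v⟫ = -⟪u - v, pg u - pg v⟫ := inner_neg_left _ _ 
    rw [hni]
    nlinarith [hf]
  -- the iteration
  have hρ0 : 0 ≤ |1 - α| + δ * α := add_nonneg (abs_nonneg _) (mul_nonneg hδ0 hα₁.le)
  have hstep : ∀ k, ‖z (k + 1) - zbar‖ ≤ (|1 - α| + δ * α) * ‖z k - zbar‖ := by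
    intro k
    have e : z (k + 1) - zbar
        = (1 - α) • (z k - zbar) + α • (Rg (Rf (z k)) - Rg (Rf zbar)) := by
      rw [hz k, hzbar]; module
    rw [e]
    have h1 : ‖Rg (Rf (z k)) - Rg (Rf zbar)‖ ≤ δ * ‖z k - zbar‖ :=
      le_trans (hRgn _ _) (hcontr _ _)
    calc ‖(1 - α) • (z k - zbar) + α • (Rg (Rf (z k)) - Rg (Rf zbar))‖
        ≤ ‖(1 - α) • (z k - zbar)‖ + ‖α • (Rg (Rf (z k)) - Rg (Rf zbar))‖ :=
          norm_add_le _ _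
      _ = |1 - α| * ‖z k - zbar‖ + α * ‖Rg (Rf (z k)) - Rg (Rf zbar)‖ := by
          rw [norm_smul, norm_smul, Real.norm_eq_abs, Real.norm_eq_abs, abs_of_pos hα₁]
      _ ≤ |1 - α| * ‖z k - zbar‖ + α * (δ * ‖z k - zbar‖) := by
          have := mul_le_mul_of_nonneg_left h1 hα₁.le
          linarith
      _ = (|1 - α| + δ * α) * ‖z k - zbar‖ := by ring
  have hiter : ∀ k, ‖z k - zbar‖ ≤ (|1 - α| + δ * α) ^ k * ‖z 0 - zbar‖ := by
    intro k
    induction k with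
    | zero => simp
    | succ n ih =>
        calc ‖z (n + 1) - zbar‖ ≤ (|1 - α| + δ * α) * ‖z n - zbar‖ := hstep n
          _ ≤ (|1 - α| + δ * α) * ((|1 - α| + δ * α) ^ n * ‖z 0 - zbar‖) :=
              mul_le_mul_of_nonneg_left ih hρ0
          _ = (|1 - α| + δ * α) ^ (n + 1) * ‖z 0 - zbar‖ := by ring
  intro k
  have hl := hlip (z k) zbar
  calc ‖pf (z k) - pf zbar‖ ≤ ‖z k - zbar‖ / (1 + γ * σ) := by
        rw [le_div_iff₀ hγσ]; linarith [hl]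
    _ ≤ ((|1 - α| + δ * α) ^ k * ‖z 0 - zbar‖) / (1 + γ * σ) := by
        gcongr
        exact hiter k
    _ = (|1 - α| + δ * α) ^ k * (1 / (1 + γ * σ)) * ‖z 0 - zbar‖ := by ring
end

section
/- Let H be a real Hilbert space, let γ > 0 and σ > 0, and let f : H → ℝ be convex, continuous and σ-strongly convex (i.e. f − (σ/2)‖·‖² is convex). Let p : H → H be the proximal operator prox_{γf}. Then p is (1/(1+γσ))-Lipschitz: ‖p(x) − p(y)‖ ≤ (1/(1+γσ))·‖x − y‖ for all x, y ∈ H. -/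
open scoped RealInnerProductSpace

lemma min_strong_aux {H : Type*} [NormedAddCommGroup H] [InnerProductSpace ℝ H]
    (μ : ℝ) (hμ : 0 < μ) (g : H → ℝ)
    (hg : ConvexOn ℝ Set.univ (fun x => g x - μ / 2 * ‖x‖ ^ 2))
    (z : H) (hz : ∀ x, g z ≤ g x) :
    ∀ x, g z + μ / 2 * ‖x - z‖ ^ 2 ≤ g x := by
  intro x
  set a : ℝ := g x - g z with ha
  set b : ℝ := μ / 2 * ‖x - z‖ ^ 2 with hb
  have hb0 : 0 ≤ b := by positivity
  have ha0 : 0 ≤ a := by rw [ha]; linarith [hz x]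
  have key : ∀ lam : ℝ, 0 < lam → lam < 1 → (1 - lam) * b ≤ a := by
    intro lam hl0 hl1
    have h := hg.2 (Set.mem_univ x) (Set.mem_univ z) (le_of_lt hl0)
      (by linarith : (0:ℝ) ≤ 1 - lam) (by ring)
    have hmin := hz (lam • x + (1 - lam) • z)
    have hnorm : ‖lam • x + (1 - lam) • z‖ ^ 2
        = lam * ‖x‖ ^ 2 + (1 - lam) * ‖z‖ ^ 2 - lam * (1 - lam) * ‖x - z‖ ^ 2 := by
      have e1 : ‖lam • x + (1 - lam) • z‖ ^ 2 = ⟪lam • x + (1 - lam) • z, lam • x + (1 - lam) • z⟫ := by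
        rw [real_inner_self_eq_norm_sq]
      have e2 : ‖x - z‖ ^ 2 = ⟪x - z, x - z⟫ := by rw [real_inner_self_eq_norm_sq]
      have ex : ‖x‖ ^ 2 = ⟪x, x⟫ := by rw [real_inner_self_eq_norm_sq]
      have ez : ‖z‖ ^ 2 = ⟪z, z⟫ := by rw [real_inner_self_eq_norm_sq]
      rw [e1, e2, ex, ez]
      simp only [inner_add_left, inner_add_right, inner_sub_left, inner_sub_right,
        real_inner_smul_left, real_inner_smul_right]
      have hc : ⟪z, x⟫ = ⟪x, z⟫ := real_inner_comm x z
      rw [hc]; ring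
    simp only [smul_eq_mul] at h
    rw [hnorm] at h
    have hll : lam * ((1 - lam) * b) ≤ lam * a := by
      rw [ha, hb]
      nlinarith [h, hmin]
    have := (mul_le_mul_iff_right₀ hl0).mp hll
    linarith
  by_contra hcon
  push_neg at hcon
  have hab : a < b := by rw [ha, hb]; linarith [hcon]
  have hbpos : 0 < b := lt_of_le_of_lt ha0 hab
  have hl : (b - a) / (2 * b) > 0 := div_pos (by linarith) (by linarith)
  have hl1 : (b - a) / (2 * b) < 1 := by
    rw [div_lt_one (by positivity)]; linarith
  have hk := key _ hl hl1
  have hexp : (1 - (b - a) / (2 * b)) * b = b - (b - a) / 2 := by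
    field_simp
  rw [hexp] at hk
  linarith

/-- The proximal operator of a `σ`-strongly convex function is
`1/(1+γσ)`-Lipschitz continuous. -/
theorem prox_lipschitz_of_stronglyConvex
    {H : Type*} [NormedAddCommGroup H] [InnerProductSpace ℝ H] [CompleteSpace H]
    (γ σ : ℝ) (hγ : 0 < γ) (hσ : 0 < σ)
    (f : H → ℝ) (hf_conv : ConvexOn ℝ Set.univ f) (hf_cont : Continuous f)
    (hf_sc : ConvexOn ℝ Set.univ (fun x => f x - σ / 2 * ‖x‖ ^ 2))
    (p : H → H)
    (hp : ∀ y x, γ * f (p y) + (1 / 2) * ‖p y - y‖ ^ 2 ≤ γ * f x + (1 / 2) * ‖x - y‖ ^ 2) :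
    ∀ x y, ‖p x - p y‖ ≤ (1 / (1 + γ * σ)) * ‖x - y‖ := by
  intro x y
  set μ : ℝ := 1 + γ * σ with hμdef
  have hμ : 0 < μ := by positivity
  have hstrong : ∀ w : H, ConvexOn ℝ (Set.univ : Set H)
      (fun u => (γ * f u + (1/2) * ‖u - w‖ ^ 2) - μ / 2 * ‖u‖ ^ 2) := by
    intro w
    have haff : ConvexOn ℝ (Set.univ : Set H) (fun u => -⟪u, w⟫ + ‖w‖ ^ 2 / 2) := by
      refine ⟨convex_univ, ?_⟩
      intro u _ v _ a b haa hbb hab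
      simp only [inner_add_left, real_inner_smul_left, smul_eq_mul]
      nlinarith [hab]
    have hsm : ConvexOn ℝ (Set.univ : Set H) (fun u => γ * (f u - σ / 2 * ‖u‖ ^ 2)) := by
      simpa [smul_eq_mul] using hf_sc.smul (le_of_lt hγ)
    have hadd := hsm.add haff
    convert hadd using 1
    · rfl
    funext u
    have hexp : ‖u - w‖ ^ 2 = ‖u‖ ^ 2 - 2 * ⟪u, w⟫ + ‖w‖ ^ 2 := by
      rw [norm_sub_sq_real]
    simp only [Pi.add_apply, hμdef]
    rw [hexp]; ring
  have hkey : ∀ w u : H,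
      (γ * f (p w) + (1/2) * ‖p w - w‖ ^ 2) + μ / 2 * ‖u - p w‖ ^ 2
        ≤ γ * f u + (1/2) * ‖u - w‖ ^ 2 := by
    intro w u
    have := min_strong_aux μ hμ (fun u => γ * f u + (1/2) * ‖u - w‖ ^ 2)
      (hstrong w) (p w) (hp w) u
    linarith [this]
  have h1 := hkey x (p y)
  have h2 := hkey y (p x)
  have inner_ineq : μ * ‖p x - p y‖ ^ 2 ≤ ⟪p x - p y, x - y⟫ := by
    have expand : ∀ a b c : H, ‖a - c‖ ^ 2 = ‖a - b‖ ^ 2 + 2 * ⟪a - b, b - c⟫ + ‖b - c‖ ^ 2 := by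
      intro a b c
      have h : a - c = (a - b) + (b - c) := by abel
      rw [h, norm_add_sq_real]
    rw [expand (p y) (p x) x] at h1
    rw [expand (p x) (p y) y] at h2
    have hsymm : ‖p y - p x‖ ^ 2 = ‖p x - p y‖ ^ 2 := by rw [norm_sub_rev]
    have hin : ⟪p y - p x, p x - x⟫ + ⟪p x - p y, p y - y⟫
        = ⟪p x - p y, x - y⟫ - ‖p x - p y‖ ^ 2 := by
      have hneg : ⟪p y - p x, p x - x⟫ = -⟪p x - p y, p x - x⟫ := by
        rw [← inner_neg_left]
        congr 1
        abel
      rw [hneg]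
      have h4 : ⟪p x - p y, p x - x⟫ = ⟪p x - p y, p x - p y⟫ + ⟪p x - p y, p y - x⟫ := by
        rw [← inner_add_right]
        congr 1
        abel
      have h5 : ⟪p x - p y, p y - y⟫ = ⟪p x - p y, p y - x⟫ + ⟪p x - p y, x - y⟫ := by
        rw [← inner_add_right]
        congr 1
        abel
      rw [h4, h5, real_inner_self_eq_norm_sq]; ring
    rw [hsymm] at h1
    nlinarith [h1, h2, hin]
  have hcs : ⟪p x - p y, x - y⟫ ≤ ‖p x - p y‖ * ‖x - y‖ := real_inner_le_norm _ _
  have hfin : μ * ‖p x - p y‖ ^ 2 ≤ ‖p x - p y‖ * ‖x - y‖ := le_trans inner_ineq hcs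
  rcases eq_or_lt_of_le (norm_nonneg (p x - p y)) with h0 | h0
  · rw [← h0]; positivity
  · have hml : μ * ‖p x - p y‖ ≤ ‖x - y‖ := by
      rw [← mul_le_mul_iff_left₀ h0]
      nlinarith [hfin]
    rw [one_div, ← div_eq_inv_mul, le_div_iff₀ hμ]
    linarith [hml]
end

section
/- Let β ≥ σ > 0. For γ > 0 define δ(γ) := max((γβ − 1)/(γβ + 1), (1 − γσ)/(1 + γσ)). Then for every γ > 0 and every α > 0, the convergence-rate factor satisfies |1 − α| + α·δ(γ) ≥ (√(β/σ) − 1)/(√(β/σ) + 1), and equality holds for the optimal parameters α = 1 and γ = 1/√(σβ); that is, min over γ > 0 and α > 0 of |1 − α| + α·δ(γ) equals (√(β/σ) − 1)/(√(β/σ) + 1), attained at α = 1, γ = 1/√(σβ). -/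
/-- Optimal parameter selection for Douglas–Rachford splitting: the rate factor
`|1−α| + α·δ(γ)` is minimized over `γ > 0`, `α > 0` by `α = 1`, `γ = 1/√(σβ)`,
with optimal value `(√(β/σ)−1)/(√(β/σ)+1)`. -/
theorem douglasRachford_optimal_parameters (β σ : ℝ) (hσ : 0 < σ) (hβσ : σ ≤ β) :
    (∀ γ α : ℝ, 0 < γ → 0 < α →
        (Real.sqrt (β / σ) - 1) / (Real.sqrt (β / σ) + 1) ≤
          |1 - α| + α * max ((γ * β - 1) / (γ * β + 1)) ((1 - γ * σ) / (1 + γ * σ)))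
      ∧ |1 - (1 : ℝ)| + 1 *
            max ((1 / Real.sqrt (σ * β) * β - 1) / (1 / Real.sqrt (σ * β) * β + 1))
              ((1 - 1 / Real.sqrt (σ * β) * σ) / (1 + 1 / Real.sqrt (σ * β) * σ)) =
          (Real.sqrt (β / σ) - 1) / (Real.sqrt (β / σ) + 1) := by
  have hβ : 0 < β := lt_of_lt_of_le hσ hβσ
  set r := Real.sqrt (β / σ) with hrdef
  have hr0 : 0 < r := Real.sqrt_pos.mpr (div_pos hβ hσ)
  have hr2 : r ^ 2 = β / σ := Real.sq_sqrt (le_of_lt (div_pos hβ hσ))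
  have hr1 : 1 ≤ r := by
    have : (1 : ℝ) ≤ β / σ := (one_le_div hσ).mpr hβσ
    nlinarith [hr0]
  set s := Real.sqrt (σ * β) with hsdef
  have hs0 : 0 < s := Real.sqrt_pos.mpr (mul_pos hσ hβ)
  have hs2 : s ^ 2 = σ * β := Real.sq_sqrt (le_of_lt (mul_pos hσ hβ))
  have hsr : s * r = β := by
    have h1 : (s * r) ^ 2 = β ^ 2 := by
      rw [mul_pow, hr2, hs2]; field_simp
    nlinarith [mul_pos hs0 hr0, hβ]
  have hσr : σ * r = s := by
    have h1 : (σ * r) * s = s * s := by nlinarith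
    have := mul_right_cancel₀ (ne_of_gt hs0) h1
    linarith
  constructor
  · intro γ α hγ hα
    set f := (γ * β - 1) / (γ * β + 1) with hf
    set g := (1 - γ * σ) / (1 + γ * σ) with hg
    have hγβ : 0 < γ * β := mul_pos hγ hβ
    have hγσ : 0 < γ * σ := mul_pos hγ hσ
    -- max f g ≥ (r-1)/(r+1)
    have hkey : (r - 1) / (r + 1) ≤ max f g := by
      rcases le_or_gt r (γ * β) with h | h
      · refine le_max_of_le_left ?_
        rw [div_le_div_iff₀ (by linarith) (by linarith)]
        nlinarith
      · refine le_max_of_le_right ?_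
        have hgs : γ * σ * r < 1 := by
          have : γ * σ * r ^ 2 = γ * β := by
            rw [hr2]; field_simp
          nlinarith
        rw [div_le_div_iff₀ (by linarith) (by linarith)]
        nlinarith
    have hδlt1 : max f g < 1 := by
      apply max_lt
      · rw [div_lt_one (by linarith)]; linarith
      · rw [div_lt_one (by linarith)]; linarith
    have hδgtm1 : -1 < max f g := by
      refine lt_max_of_lt_right ?_
      rw [lt_div_iff₀ (by linarith)]; linarith
    have hmain : max f g ≤ |1 - α| + α * max f g := by
      rcases le_or_gt α 1 with h | h
      · rw [abs_of_nonneg (by linarith)]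
        nlinarith
      · rw [abs_of_neg (by linarith)]
        nlinarith
    linarith
  · have h1 : 1 / s * β = r := by
      field_simp
      linarith [hsr]
    have h2 : 1 / s * σ = 1 / r := by
      rw [div_mul_eq_mul_div, one_mul, div_eq_div_iff (ne_of_gt hs0) (ne_of_gt hr0)]
      linarith [hσr]
    rw [h1, h2]
    have h3 : (1 - 1 / r) / (1 + 1 / r) = (r - 1) / (r + 1) := by
      rw [div_eq_div_iff (by positivity) (by linarith)]
      field_simp
    rw [h3, max_self]
    simp
end

section
/- Let β ≥ σ > 0 and γ > 0, and set δ := max((γβ − 1)/(γβ + 1), (1 − γσ)/(1 + γσ)). For every α ∈ (0, 2/(1+δ)): max( |1 − α + α(1 − γσ)/(1 + γσ)|, |1 − α − α(1 − γσ)/(1 + γσ)|, |1 − α + α(1 − γβ)/(1 + γβ)|, |1 − α − α(1 − γβ)/(1 + γβ)| ) = |1 − α| + α·δ. (These four numbers are the exact one-step contraction factors of the Douglas–Rachford algorithm on the four test problems built from f(x) = (1/2)(βx₁² + σx₂²) on ℝ² together with g ≡ 0 or g the indicator of {0}; hence the rate bound |1 − α| + αδ is tight over the class of σ-strongly convex,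 β-smooth f.) -/
private lemma max_abs_add_sub (x y : ℝ) : max |x + y| |x - y| = |x| + |y| := by
  rcases le_total 0 x with hx | hx <;> rcases le_total 0 y with hy | hy
  · rw [abs_of_nonneg hx, abs_of_nonneg hy, abs_of_nonneg (by linarith : (0:ℝ) ≤ x + y),
      max_eq_left (abs_le.mpr ⟨by linarith, by linarith⟩)]
  · rw [abs_of_nonneg hx, abs_of_nonpos hy, abs_of_nonneg (by linarith : (0:ℝ) ≤ x - y),
      max_eq_right (abs_le.mpr ⟨by linarith, by linarith⟩)]; ring
  · rw [abs_of_nonpos hx, abs_of_nonneg hy, abs_of_nonpos (by linarith : x - y ≤ 0),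
      max_eq_right (abs_le.mpr ⟨by linarith, by linarith⟩)]; ring
  · rw [abs_of_nonpos hx, abs_of_nonpos hy, abs_of_nonpos (by linarith : x + y ≤ 0),
      max_eq_left (abs_le.mpr ⟨by linarith, by linarith⟩)]; ring

/-- Tightness of the Douglas–Rachford rate bound: for `α ∈ (0, 2/(1+δ))` the largest of
the four exact per-iteration contraction factors of the test problems equals
`|1−α| + α·δ`. -/
theorem douglasRachford_rate_tight (β σ γ δ α : ℝ)
    (hσ : 0 < σ) (hβσ : σ ≤ β) (hγ : 0 < γ)
    (hδ : δ = max ((γ * β - 1) / (γ * β + 1)) ((1 - γ * σ) / (1 + γ * σ)))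
    (hα₁ : 0 < α) (hα₂ : α < 2 / (1 + δ)) :
    max
        (max |1 - α + α * (1 - γ * σ) / (1 + γ * σ)| |1 - α - α * (1 - γ * σ) / (1 + γ * σ)|)
        (max |1 - α + α * (1 - γ * β) / (1 + γ * β)| |1 - α - α * (1 - γ * β) / (1 + γ * β)|)
      = |1 - α| + α * δ := by
  set s := (1 - γ * σ) / (1 + γ * σ) with hs
  set b := (1 - γ * β) / (1 + γ * β) with hb
  have hσd : (0:ℝ) < 1 + γ * σ := by nlinarith
  have hβd : (0:ℝ) < 1 + γ * β := by nlinarith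
  have hbs : b ≤ s := by
    rw [hb, hs, div_le_div_iff₀ hβd hσd]; nlinarith
  have hδ' : δ = max (-b) s := by
    rw [hδ]
    congr 1
    rw [hb, ← neg_div, neg_sub, add_comm 1 (γ * β)]
  have key : max |s| |b| = δ := by
    rw [hδ']
    apply le_antisymm
    · apply max_le
      · exact abs_le.mpr ⟨by nlinarith [le_max_left (-b) s], le_trans (le_refl s) (le_max_right _ _)⟩
      · exact abs_le.mpr ⟨by nlinarith [le_max_left (-b) s], le_trans hbs (le_max_right _ _)⟩
    · apply max_le
      · exact le_trans (neg_le_abs b) (le_max_right _ _)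
      · exact le_trans (le_abs_self s) (le_max_left _ _)
  have e1 : ∀ t : ℝ, α * (1 - γ * t) / (1 + γ * t) = α * ((1 - γ * t) / (1 + γ * t)) := by
    intro t; rw [mul_div_assoc]
  rw [e1 σ, e1 β, ← hs, ← hb, max_abs_add_sub, max_abs_add_sub,
    abs_mul, abs_mul, abs_of_nonneg hα₁.le, max_add_add_left, ← mul_max_of_nonneg _ _ hα₁.le, key]
end

section
/- Let β ≥ σ > 0, γ > 0 and α ∈ ℝ. Define f : ℝ² → ℝ (Euclidean) by f(x) = (1/2)(βx₁² + σx₂²). Then: (a) f is σ-strongly convex and β-smooth; (b) for every y ∈ ℝ², the unique minimizer of x ↦ γf(x) + (1/2)‖x − y‖² is prox_{γf}(y) = (y₁/(1+γβ), y₂/(1+γσ)), so the reflected proximal operator is R_{γf}(y) = (((1−γβ)/(1+γβ))y₁, ((1−γσ)/(1+γσ))y₂); (c) the Douglas–Rachford operator for the pair (f, g ≡ 0), namely T := (1−α)·Id + α·R_{γf} (since R_{γg} = Id for g ≡ 0), satisfies T(z) = ((1 − α + α(1−γβ)/(1+γβ))·z₁, (1 − α + α(1−γσ)/(1+γσ))·z₂)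 for all z; consequently, starting from z⁰ = (0, 1), the iterates z^{k+1} = T(z^k) satisfy ‖z^k‖ = |1 − α + α(1−γσ)/(1+γσ)|^k, with 0 a fixed point of R_{γg} ∘ R_{γf}. -/
lemma norm2 (x : EuclideanSpace ℝ (Fin 2)) : ‖x‖ = Real.sqrt ((x 0)^2 + (x 1)^2) := by
  rw [EuclideanSpace.norm_eq]
  simp [Fin.sum_univ_two, Real.norm_eq_abs, sq_abs]

lemma normsq (x : EuclideanSpace ℝ (Fin 2)) : ‖x‖^2 = (x 0)^2 + (x 1)^2 := by
  rw [norm2, Real.sq_sqrt]; positivity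

lemma e2ext (a b : EuclideanSpace ℝ (Fin 2)) (h0 : a 0 = b 0) (h1 : a 1 = b 1) : a = b := by
  ext i; fin_cases i <;> assumption

lemma conv_coord (c : ℝ) (hc : 0 ≤ c) (i : Fin 2) :
    ConvexOn ℝ Set.univ (fun x : EuclideanSpace ℝ (Fin 2) => c * (x i)^2) := by
  have h1 : ConvexOn ℝ Set.univ (fun t : ℝ => t ^ 2) := (even_two.convexOn_pow)
  have h2 := (h1.smul hc).comp_linearMap
    (EuclideanSpace.proj i : EuclideanSpace ℝ (Fin 2) →L[ℝ] ℝ).toLinearMap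
  convert h2 using 1
  · rfl
  · rfl
  · rfl
  · simp
  · funext x; simp [smul_eq_mul]

lemma oned (γ c t y : ℝ) (h : 0 < 1 + γ*c) :
    γ*(c/2*t^2) + (1/2)*(t-y)^2 =
    γ*(c/2*(y/(1+γ*c))^2) + (1/2)*(y/(1+γ*c)-y)^2 + (1+γ*c)/2*(t - y/(1+γ*c))^2 := by
  field_simp
  ring


set_option maxHeartbeats 1600000 in
/-- The two-dimensional test problem `f(x) = (1/2)(βx₁² + σx₂²)` with `g ≡ 0`:
`f` is `σ`-strongly convex and `β`-smooth, its proximal and reflected proximal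
operators are diagonal, the Douglas–Rachford operator is diagonal, and from
`z⁰ = (0,1)` the iterates contract exactly with factor `|1 − α + α(1−γσ)/(1+γσ)|`. -/
theorem douglasRachford_test_problem_g_zero (β σ γ α : ℝ)
    (hσ : 0 < σ) (hβσ : σ ≤ β) (hγ : 0 < γ)
    (f : EuclideanSpace ℝ (Fin 2) → ℝ)
    (hf : f = fun x => (1 / 2) * (β * (x 0) ^ 2 + σ * (x 1) ^ 2))
    (pr : EuclideanSpace ℝ (Fin 2) → EuclideanSpace ℝ (Fin 2))
    (hpr : pr = fun y => !₂[y 0 / (1 + γ * β), y 1 / (1 + γ * σ)])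
    (Rf : EuclideanSpace ℝ (Fin 2) → EuclideanSpace ℝ (Fin 2))
    (hRf : Rf = fun y => (2 : ℝ) • pr y - y)
    (T : EuclideanSpace ℝ (Fin 2) → EuclideanSpace ℝ (Fin 2))
    (hT : T = fun z => (1 - α) • z + α • Rf z) :
    -- (a) σ-strong convexity and β-smoothness of f
    (ConvexOn ℝ Set.univ (fun x : EuclideanSpace ℝ (Fin 2) => f x - σ / 2 * ‖x‖ ^ 2)
      ∧ ConvexOn ℝ Set.univ (fun x : EuclideanSpace ℝ (Fin 2) => β / 2 * ‖x‖ ^ 2 - f x))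
    -- (b) pr is the unique minimizer defining prox_{γf}, and R_{γf} is diagonal
    ∧ (∀ y, (∀ x, γ * f (pr y) + (1 / 2) * ‖pr y - y‖ ^ 2 ≤ γ * f x + (1 / 2) * ‖x - y‖ ^ 2)
        ∧ ∀ x, (∀ x', γ * f x + (1 / 2) * ‖x - y‖ ^ 2 ≤ γ * f x' + (1 / 2) * ‖x' - y‖ ^ 2) →
            x = pr y)
    ∧ (∀ y, Rf y = !₂[(1 - γ * β) / (1 + γ * β) * y 0, (1 - γ * σ) / (1 + γ * σ) * y 1])
    -- (c) the Douglas–Rachford operator (with R_{γg} = Id since g ≡ 0) and its iterates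
    ∧ (∀ z, T z = !₂[(1 - α + α * (1 - γ * β) / (1 + γ * β)) * z 0,
        (1 - α + α * (1 - γ * σ) / (1 + γ * σ)) * z 1])
    ∧ Rf 0 = 0
    ∧ ∀ z : ℕ → EuclideanSpace ℝ (Fin 2), z 0 = !₂[0, 1] →
        (∀ k, z (k + 1) = T (z k)) →
        ∀ k, ‖z k‖ = |1 - α + α * (1 - γ * σ) / (1 + γ * σ)| ^ k := by
  have hβ : (0:ℝ) < β := lt_of_lt_of_le hσ hβσ
  have hb : (0:ℝ) < 1 + γ * β := by positivity
  have hs : (0:ℝ) < 1 + γ * σ := by positivity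
  have hprc : ∀ y : EuclideanSpace ℝ (Fin 2),
      pr y 0 = y 0 / (1 + γ * β) ∧ pr y 1 = y 1 / (1 + γ * σ) := by
    intro y; rw [hpr]; constructor <;> simp
  have hRfc : ∀ y : EuclideanSpace ℝ (Fin 2),
      Rf y 0 = 2 * (y 0 / (1 + γ * β)) - y 0 ∧ Rf y 1 = 2 * (y 1 / (1 + γ * σ)) - y 1 := by
    intro y
    obtain ⟨hp0, hp1⟩ := hprc y
    rw [hRf]
    constructor
    · show (2:ℝ) * pr y 0 - y 0 = _
      rw [hp0]
    · show (2:ℝ) * pr y 1 - y 1 = _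
      rw [hp1]
  have hTc : ∀ y : EuclideanSpace ℝ (Fin 2),
      T y 0 = (1 - α) * y 0 + α * (2 * (y 0 / (1 + γ * β)) - y 0)
      ∧ T y 1 = (1 - α) * y 1 + α * (2 * (y 1 / (1 + γ * σ)) - y 1) := by
    intro y
    obtain ⟨hr0, hr1⟩ := hRfc y
    rw [hT]
    constructor
    · show (1 - α) * y 0 + α * Rf y 0 = _
      rw [hr0]
    · show (1 - α) * y 1 + α * Rf y 1 = _
      rw [hr1]
  have hobj : ∀ x y : EuclideanSpace ℝ (Fin 2),
      γ * f x + (1/2) * ‖x - y‖^2 =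
      (γ*(β/2*(x 0)^2) + (1/2)*(x 0 - y 0)^2) + (γ*(σ/2*(x 1)^2) + (1/2)*(x 1 - y 1)^2) := by
    intro x y
    rw [hf, normsq]
    have h0 : (x - y) 0 = x 0 - y 0 := rfl
    have h1 : (x - y) 1 = x 1 - y 1 := rfl
    rw [h0, h1]; ring
  refine ⟨⟨?_, ?_⟩, ?_, ?_, ?_, ?_, ?_⟩
  · have := conv_coord ((β - σ)/2) (by linarith) 0
    convert this using 1
    funext x; rw [hf, normsq]; ring
  · have := conv_coord ((β - σ)/2) (by linarith) 1
    convert this using 1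
    funext x; rw [hf, normsq]; ring
  · intro y
    obtain ⟨hp0, hp1⟩ := hprc y
    constructor
    · intro x
      rw [hobj, hobj, hp0, hp1]
      have e0 := oned γ β (x 0) (y 0) hb
      have e1 := oned γ σ (x 1) (y 1) hs
      linarith [mul_nonneg (by positivity : (0:ℝ) ≤ (1 + γ*β)/2) (sq_nonneg (x 0 - y 0 / (1 + γ*β))),
        mul_nonneg (by positivity : (0:ℝ) ≤ (1 + γ*σ)/2) (sq_nonneg (x 1 - y 1 / (1 + γ*σ)))]
    · intro x hx
      have hle := hx (pr y)
      rw [hobj, hobj, hp0, hp1] at hle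
      have e0 := oned γ β (x 0) (y 0) hb
      have e1 := oned γ σ (x 1) (y 1) hs
      have t0 : 0 ≤ (1 + γ*β)/2 * (x 0 - y 0/(1+γ*β))^2 :=
        mul_nonneg (by positivity) (sq_nonneg _)
      have t1 : 0 ≤ (1 + γ*σ)/2 * (x 1 - y 1/(1+γ*σ))^2 :=
        mul_nonneg (by positivity) (sq_nonneg _)
      have s0 : (x 0 - y 0/(1+γ*β))^2 ≤ 0 := by
        have h : (1 + γ*β)/2 * (x 0 - y 0/(1+γ*β))^2 ≤ (1 + γ*β)/2 * 0 := by
          rw [mul_zero]; linarith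
        exact le_of_mul_le_mul_left h (by positivity)
      have s1 : (x 1 - y 1/(1+γ*σ))^2 ≤ 0 := by
        have h : (1 + γ*σ)/2 * (x 1 - y 1/(1+γ*σ))^2 ≤ (1 + γ*σ)/2 * 0 := by
          rw [mul_zero]; linarith
        exact le_of_mul_le_mul_left h (by positivity)
      have q0 : x 0 - y 0/(1+γ*β) = 0 :=
        pow_eq_zero_iff two_ne_zero |>.mp (le_antisymm s0 (sq_nonneg _))
      have q1 : x 1 - y 1/(1+γ*σ) = 0 :=
        pow_eq_zero_iff two_ne_zero |>.mp (le_antisymm s1 (sq_nonneg _))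
      refine e2ext _ _ ?_ ?_
      · rw [hp0]; linarith
      · rw [hp1]; linarith
  · intro y
    obtain ⟨hr0, hr1⟩ := hRfc y
    refine e2ext _ _ ?_ ?_
    · rw [hr0]; simp only [PiLp.toLp_apply, Matrix.cons_val_zero]; field_simp; ring
    · rw [hr1]; simp only [PiLp.toLp_apply, Matrix.cons_val_one, Matrix.head_cons, Matrix.cons_val_zero]; field_simp; ring
  · intro z
    obtain ⟨ht0, ht1⟩ := hTc z
    refine e2ext _ _ ?_ ?_
    · rw [ht0]; simp only [PiLp.toLp_apply, Matrix.cons_val_zero]; field_simp; ring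
    · rw [ht1]; simp only [PiLp.toLp_apply, Matrix.cons_val_one, Matrix.head_cons, Matrix.cons_val_zero]; field_simp; ring
  · obtain ⟨hr0, hr1⟩ := hRfc 0
    refine e2ext _ _ ?_ ?_
    · rw [hr0]; norm_num
    · rw [hr1]; norm_num
  · intro z hz0 hzk k
    set c : ℝ := 1 - α + α * (1 - γ * σ) / (1 + γ * σ) with hc
    have key : ∀ k, z k 0 = 0 ∧ z k 1 = c ^ k := by
      intro k
      induction k with
      | zero => rw [hz0]; constructor <;> simp
      | succ n ih =>
        obtain ⟨i0, i1⟩ := ih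
        obtain ⟨ht0, ht1⟩ := hTc (z n)
        rw [hzk n]
        constructor
        · rw [ht0, i0]; ring
        · rw [ht1, i1, hc, pow_succ]
          field_simp
          ring
    obtain ⟨k0, k1⟩ := key k
    rw [norm2, k0, k1]
    rw [show (0:ℝ)^2 + (c^k)^2 = (c^k)^2 by ring, Real.sqrt_sq_eq_abs, abs_pow]
end

section
/- Let β ≥ σ > 0 and γ > 0, and set δ := max((γβ − 1)/(γβ + 1), (1 − γσ)/(1 + γσ)). For every α ∈ (0, 2/(1+δ)) there exist: a function f : ℝ² → ℝ that is σ-strongly convex and β-smooth; a map q : ℝ² → ℝ² that is either the identity or the metric projection onto the closed convex set {0} (so that q is the proximal mapping of a proper closed convex function, namely g ≡ 0 or the indicator of {0}); an initial point z⁰ and a fixed point z̄ of R_g ∘ R_f with z⁰ ≠ z̄, where R_f := 2·prox_{γf} − Id and R_g := 2q − Id; such that the Douglas–Rachford iterates z^{k+1} = (1−α)z^k + α·R_g(R_f(z^k)) satisfy ‖z^k − z̄‖ = (|1 − α| + α·δ)^k · ‖z⁰ − z̄‖ for all k ≥ 0. That is, the linear rate bound |1 − α| + αδ is attained exactly, so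 it is tight for the class of problems with σ-strongly convex, β-smooth f and convex g. -/
noncomputable section

private lemma convA (a : ℝ) (ha : 0 ≤ a) :
    ConvexOn ℝ Set.univ (fun x : EuclideanSpace ℝ (Fin 2) => a * ‖x‖ ^ 2) := by
  refine ⟨convex_univ, fun x _ y _ p q hp hq hpq => ?_⟩
  have e0 : ‖x - y‖ ^ 2 = ‖x‖ ^ 2 - 2 * inner ℝ x y + ‖y‖ ^ 2 := norm_sub_sq_real x y
  have key : (0:ℝ) ≤ ‖x‖ ^ 2 - 2 * inner ℝ x y + ‖y‖ ^ 2 := e0 ▸ sq_nonneg _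
  have e1 : ‖p • x + q • y‖ ^ 2
      = p ^ 2 * ‖x‖ ^ 2 + 2 * (p * q) * inner ℝ x y + q ^ 2 * ‖y‖ ^ 2 := by
    rw [norm_add_sq_real, norm_smul, norm_smul, real_inner_smul_left, real_inner_smul_right,
      Real.norm_eq_abs, Real.norm_eq_abs, abs_of_nonneg hp, abs_of_nonneg hq]
    ring
  simp only [smul_eq_mul]
  rw [e1]
  have hq' : q = 1 - p := by linarith
  subst hq'
  nlinarith [mul_nonneg ha (mul_nonneg (mul_nonneg hp hq) key)]

private lemma prox_min (c γ : ℝ) (hc : 0 < c) (hγ : 0 < γ) (y x : EuclideanSpace ℝ (Fin 2)) :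
    γ * (c / 2 * ‖(1 / (1 + γ * c)) • y‖ ^ 2)
      + 1 / 2 * ‖(1 / (1 + γ * c)) • y - y‖ ^ 2
      ≤ γ * (c / 2 * ‖x‖ ^ 2) + 1 / 2 * ‖x - y‖ ^ 2 := by
  have htpos : 0 < γ * c := mul_pos hγ hc
  have h1t : (0:ℝ) < 1 + γ * c := by linarith
  have key : (0:ℝ) ≤ ‖(1 + γ * c) • x - y‖ ^ 2 := sq_nonneg _
  have e1 : ‖(1 + γ * c) • x - y‖ ^ 2
      = (1 + γ * c) ^ 2 * ‖x‖ ^ 2 - 2 * (1 + γ * c) * inner ℝ x y + ‖y‖ ^ 2 := by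
    rw [norm_sub_sq_real, norm_smul, real_inner_smul_left]
    rw [Real.norm_eq_abs, abs_of_pos h1t]
    ring
  have e2 : ‖x - y‖ ^ 2 = ‖x‖ ^ 2 - 2 * inner ℝ x y + ‖y‖ ^ 2 := by
    rw [norm_sub_sq_real]
  have e3 : ‖(1 / (1 + γ * c)) • y‖ ^ 2 = (1 / (1 + γ * c)) ^ 2 * ‖y‖ ^ 2 := by
    rw [norm_smul, Real.norm_eq_abs, abs_of_pos (by positivity : (0:ℝ) < 1 / (1 + γ * c))]
    ring
  have e4 : ‖(1 / (1 + γ * c)) • y - y‖ ^ 2 = (γ * c / (1 + γ * c)) ^ 2 * ‖y‖ ^ 2 := by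
    have hcoef : (1 / (1 + γ * c)) • y - y = (1 / (1 + γ * c) - 1) • y := by
      rw [sub_smul, one_smul]
    rw [hcoef, norm_smul, Real.norm_eq_abs]
    have : |1 / (1 + γ * c) - 1| = γ * c / (1 + γ * c) := by
      rw [abs_of_nonpos]
      · field_simp; ring
      · rw [sub_nonpos, div_le_one h1t]; linarith
    rw [this]; ring
  rw [e3, e4, e2]
  rw [e1] at key
  set A := ‖x‖ ^ 2 with hA'
  set B := ‖y‖ ^ 2 with hB'
  set I := (inner ℝ x y : ℝ) with hI'
  have key2 : 0 ≤ ((1 + γ * c) * ((1 + γ * c) ^ 2 * A - 2 * (1 + γ * c) * I + B))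
      / (2 * (1 + γ * c) ^ 2) :=
    div_nonneg (mul_nonneg h1t.le key) (by positivity)
  have expand : γ * (c / 2 * A) + 1 / 2 * (A - 2 * I + B)
      - (γ * (c / 2 * ((1 / (1 + γ * c)) ^ 2 * B)) + 1 / 2 * ((γ * c / (1 + γ * c)) ^ 2 * B))
      = ((1 + γ * c) * ((1 + γ * c) ^ 2 * A - 2 * (1 + γ * c) * I + B))
      / (2 * (1 + γ * c) ^ 2) := by
    field_simp
    ring
  linarith [expand ▸ key2]

private lemma main_case (β σ γ δ α c s : ℝ) (hσ : 0 < σ) (hc1 : σ ≤ c) (hc2 : c ≤ β)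
    (hγ : 0 < γ)
    (q : EuclideanSpace ℝ (Fin 2) → EuclideanSpace ℝ (Fin 2))
    (hq : (q = id ∧ s = 1) ∨ (q = (fun _ => 0) ∧ s = -1))
    (hr : |1 - α + α * (s * ((1 - γ * c) / (1 + γ * c)))| = |1 - α| + α * δ) :
    ∃ (f : EuclideanSpace ℝ (Fin 2) → ℝ)
      (pf q : EuclideanSpace ℝ (Fin 2) → EuclideanSpace ℝ (Fin 2))
      (z0 zbar : EuclideanSpace ℝ (Fin 2)),
      ConvexOn ℝ Set.univ (fun x : EuclideanSpace ℝ (Fin 2) => f x - σ / 2 * ‖x‖ ^ 2)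
      ∧ ConvexOn ℝ Set.univ (fun x : EuclideanSpace ℝ (Fin 2) => β / 2 * ‖x‖ ^ 2 - f x)
      ∧ (∀ y x, γ * f (pf y) + (1 / 2) * ‖pf y - y‖ ^ 2 ≤ γ * f x + (1 / 2) * ‖x - y‖ ^ 2)
      ∧ (q = id ∨ q = fun _ => 0)
      ∧ (fun x => (2 : ℝ) • q x - x) ((fun x => (2 : ℝ) • pf x - x) zbar) = zbar
      ∧ z0 ≠ zbar
      ∧ ∀ z : ℕ → EuclideanSpace ℝ (Fin 2), z 0 = z0 →
          (∀ k, z (k + 1) =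
            (1 - α) • z k + α • ((2 : ℝ) • q ((2 : ℝ) • pf (z k) - z k) -
              ((2 : ℝ) • pf (z k) - z k))) →
          ∀ k, ‖z k - zbar‖ = (|1 - α| + α * δ) ^ k * ‖z0 - zbar‖ := by
  have hc : 0 < c := lt_of_lt_of_le hσ hc1
  have h1t : (0:ℝ) < 1 + γ * c := by positivity
  set lam := (1 - γ * c) / (1 + γ * c) with hlam
  set r := 1 - α + α * (s * lam) with hrdef
  refine ⟨fun x => c / 2 * ‖x‖ ^ 2, fun y => (1 / (1 + γ * c)) • y, q,
    EuclideanSpace.single 0 1, 0, ?_, ?_, ?_, ?_, ?_, ?_, ?_⟩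
  · have he : (fun x : EuclideanSpace ℝ (Fin 2) => c / 2 * ‖x‖ ^ 2 - σ / 2 * ‖x‖ ^ 2)
        = fun x : EuclideanSpace ℝ (Fin 2) => ((c - σ) / 2) * ‖x‖ ^ 2 := by
      funext x; ring
    rw [he]
    exact convA _ (by linarith)
  · have he : (fun x : EuclideanSpace ℝ (Fin 2) => β / 2 * ‖x‖ ^ 2 - c / 2 * ‖x‖ ^ 2)
        = fun x : EuclideanSpace ℝ (Fin 2) => ((β - c) / 2) * ‖x‖ ^ 2 := by
      funext x; ring
    rw [he]
    exact convA _ (by linarith)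
  · exact fun y x => prox_min c γ hc hγ y x
  · rcases hq with ⟨h, _⟩ | ⟨h, _⟩
    · exact Or.inl h
    · exact Or.inr h
  · rcases hq with ⟨h, _⟩ | ⟨h, _⟩ <;> subst h <;> simp
  · intro h
    have : ‖EuclideanSpace.single (0 : Fin 2) (1:ℝ)‖ = 0 := by rw [h, norm_zero]
    rw [EuclideanSpace.norm_single] at this
    norm_num at this
  · intro z hz0 hrec
    have hqs : ∀ w : EuclideanSpace ℝ (Fin 2), (2 : ℝ) • q w - w = s • w := by
      rcases hq with ⟨h, h'⟩ | ⟨h, h'⟩ <;> subst h <;> subst h' <;> intro w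
      · simp [two_smul, one_smul]
      · simp [neg_smul, one_smul]
    have hstep : ∀ v : EuclideanSpace ℝ (Fin 2),
        (2 : ℝ) • ((1 / (1 + γ * c)) • v) - v = lam • v := by
      intro v
      have hco : (2:ℝ) * (1 / (1 + γ * c)) - 1 = lam := by
        rw [hlam]; field_simp; ring
      rw [smul_smul, ← hco, sub_smul, one_smul]
    have hzk : ∀ k, z k = r ^ k • EuclideanSpace.single (0 : Fin 2) (1:ℝ) := by
      intro k
      induction k with
      | zero => rw [pow_zero, one_smul, hz0]
      | succ k ih =>
        rw [hrec k, ih, hstep, hqs, smul_smul, smul_smul, smul_smul, smul_smul, ← add_smul,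
          pow_succ]
        congr 1
        rw [hrdef]
        ring
    intro k
    rw [hzk k, sub_zero, sub_zero, norm_smul, Real.norm_eq_abs, abs_pow, hrdef, hr]

/-- Tightness of the Douglas–Rachford linear rate bound: for every admissible
relaxation `α ∈ (0, 2/(1+δ))` there is a `σ`-strongly convex, `β`-smooth `f` on ℝ²
and a proximal map `q` of either `g ≡ 0` (identity) or the indicator of `{0}`
(projection, the zero map), together with a starting point `z⁰` and a fixed point `z̄`
of `R_g ∘ R_f` with `z⁰ ≠ z̄`, such that the Douglas–Rachford iterates attain the
rate `|1−α| + αδ` exactly. -/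
theorem douglasRachford_rate_bound_tight (β σ γ δ α : ℝ)
    (hσ : 0 < σ) (hβσ : σ ≤ β) (hγ : 0 < γ)
    (hδ : δ = max ((γ * β - 1) / (γ * β + 1)) ((1 - γ * σ) / (1 + γ * σ)))
    (hα₁ : 0 < α) (hα₂ : α < 2 / (1 + δ)) :
    ∃ (f : EuclideanSpace ℝ (Fin 2) → ℝ)
      (pf q : EuclideanSpace ℝ (Fin 2) → EuclideanSpace ℝ (Fin 2))
      (z0 zbar : EuclideanSpace ℝ (Fin 2)),
      -- f is σ-strongly convex and β-smooth
      ConvexOn ℝ Set.univ (fun x : EuclideanSpace ℝ (Fin 2) => f x - σ / 2 * ‖x‖ ^ 2)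
      ∧ ConvexOn ℝ Set.univ (fun x : EuclideanSpace ℝ (Fin 2) => β / 2 * ‖x‖ ^ 2 - f x)
      -- pf is the proximal operator prox_{γf}
      ∧ (∀ y x, γ * f (pf y) + (1 / 2) * ‖pf y - y‖ ^ 2 ≤ γ * f x + (1 / 2) * ‖x - y‖ ^ 2)
      -- q is the identity (prox of g ≡ 0) or the projection onto {0} (prox of ι_{{0}})
      ∧ (q = id ∨ q = fun _ => 0)
      -- z̄ is a fixed point of R_g ∘ R_f, where R_f = 2pf − Id and R_g = 2q − Id
      ∧ (fun x => (2 : ℝ) • q x - x) ((fun x => (2 : ℝ) • pf x - x) zbar) = zbar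
      ∧ z0 ≠ zbar
      -- the Douglas–Rachford iterates attain the bound exactly
      ∧ ∀ z : ℕ → EuclideanSpace ℝ (Fin 2), z 0 = z0 →
          (∀ k, z (k + 1) =
            (1 - α) • z k + α • ((2 : ℝ) • q ((2 : ℝ) • pf (z k) - z k) -
              ((2 : ℝ) • pf (z k) - z k))) →
          ∀ k, ‖z k - zbar‖ = (|1 - α| + α * δ) ^ k * ‖z0 - zbar‖ := by
  have hβ : 0 < β := lt_of_lt_of_le hσ hβσ
  have hδ0 : 0 ≤ δ := by
    rcases le_or_gt (γ * σ) 1 with h | h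
    · have : (0:ℝ) ≤ (1 - γ * σ) / (1 + γ * σ) :=
        div_nonneg (by linarith) (by nlinarith)
      calc (0:ℝ) ≤ (1 - γ * σ) / (1 + γ * σ) := this
        _ ≤ δ := hδ ▸ le_max_right _ _
    · have hb : 1 < γ * β := lt_of_lt_of_le h (by nlinarith)
      have : (0:ℝ) ≤ (γ * β - 1) / (γ * β + 1) :=
        div_nonneg (by linarith) (by nlinarith)
      calc (0:ℝ) ≤ (γ * β - 1) / (γ * β + 1) := this
        _ ≤ δ := hδ ▸ le_max_left _ _
  have hαδ : 0 ≤ α * δ := mul_nonneg hα₁.le hδ0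
  rcases le_total ((γ * β - 1) / (γ * β + 1)) ((1 - γ * σ) / (1 + γ * σ)) with hm | hm
  · -- δ = (1 - γσ)/(1 + γσ), take c = σ
    have hδ' : δ = (1 - γ * σ) / (1 + γ * σ) := hδ.trans (max_eq_right hm)
    rcases le_or_gt α 1 with hα | hα
    · refine main_case β σ γ δ α σ 1 hσ le_rfl hβσ hγ id (Or.inl ⟨rfl, rfl⟩) ?_
      rw [one_mul, ← hδ', abs_of_nonneg (by linarith), abs_of_nonneg (by linarith)]
    · refine main_case β σ γ δ α σ (-1) hσ le_rfl hβσ hγ (fun _ => 0) (Or.inr ⟨rfl, rfl⟩) ?_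
      rw [← hδ', abs_of_nonpos (by nlinarith), abs_of_nonpos (by linarith)]
      ring
  · -- δ = (γβ - 1)/(γβ + 1), take c = β
    have hδ' : δ = (γ * β - 1) / (γ * β + 1) := hδ.trans (max_eq_left hm)
    have hneg : (1 - γ * β) / (1 + γ * β) = -δ := by
      rw [hδ']
      rw [neg_div', neg_sub]
      ring_nf
    rcases le_or_gt α 1 with hα | hα
    · refine main_case β σ γ δ α β (-1) hσ hβσ le_rfl hγ (fun _ => 0) (Or.inr ⟨rfl, rfl⟩) ?_
      rw [hneg, abs_of_nonneg (by nlinarith), abs_of_nonneg (by linarith)]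
      ring
    · refine main_case β σ γ δ α β 1 hσ hβσ le_rfl hγ id (Or.inl ⟨rfl, rfl⟩) ?_
      rw [hneg, one_mul, abs_of_nonpos (by nlinarith), abs_of_nonpos (by linarith)]
      ring
end
end

section
/- Let H and K be real Hilbert spaces, β ≥ σ > 0, and let B : K → H be a bounded linear map for which there exist constants a ≥ θ > 0 with θ‖μ‖ ≤ ‖B μ‖ ≤ a‖μ‖ for all μ ∈ K (B plays the role of the adjoint A* of a surjective bounded linear operator A, with a = ‖A*‖). Let h : H → ℝ be differentiable with gradient ∇h that is (1/σ)-Lipschitz and (1/β)-strongly monotone (these are the properties of the convex conjugate f* of a σ-strongly convex, β-smooth function f), and let c ∈ K. Define d₁ : K → ℝ by d₁(μ) := h(−B μ) + ⟨c, μ⟩. Then d₁ is differentiable and its gradient ∇d₁ is (a²/σ)-Lipschitz and (θ²/β)-strongly monotone; equivalently, d₁ is (a²/σ)-smooth and (θ²/β)-strongly convex. -/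
open scoped RealInnerProductSpace

open InnerProductSpace ContinuousLinearMap

/-- Smoothness and strong convexity of the dual function
`d₁(μ) = f*(−A*μ) + ⟨c, μ⟩`: if `∇h` is `(1/σ)`-Lipschitz and `(1/β)`-strongly
monotone and `θ‖μ‖ ≤ ‖Bμ‖ ≤ a‖μ‖`, then `d₁(μ) = h(−Bμ) + ⟨c, μ⟩` has an
`(a²/σ)`-Lipschitz and `(θ²/β)`-strongly monotone gradient. -/
theorem dual_function_smooth_strongly_convex
    {H K : Type*} [NormedAddCommGroup H] [InnerProductSpace ℝ H] [CompleteSpace H]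
    [NormedAddCommGroup K] [InnerProductSpace ℝ K] [CompleteSpace K]
    (β σ θ a : ℝ) (hσ : 0 < σ) (hβσ : σ ≤ β) (hθ : 0 < θ) (hθa : θ ≤ a)
    (B : K →L[ℝ] H)
    (hlow : ∀ μ, θ * ‖μ‖ ≤ ‖B μ‖) (hup : ∀ μ, ‖B μ‖ ≤ a * ‖μ‖)
    (h : H → ℝ) (h' : H → H) (hh' : ∀ x, HasGradientAt h (h' x) x)
    (hLip : ∀ x y, ‖h' x - h' y‖ ≤ (1 / σ) * ‖x - y‖)
    (hmono : ∀ x y, ⟪h' x - h' y, x - y⟫ ≥ (1 / β) * ‖x - y‖ ^ 2)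
    (c : K) (d₁ : K → ℝ) (hd₁ : d₁ = fun μ => h (-(B μ)) + ⟪c, μ⟫) :
    ∃ d₁' : K → K,
      (∀ μ, HasGradientAt d₁ (d₁' μ) μ)
        ∧ (∀ μ ν, ‖d₁' μ - d₁' ν‖ ≤ (a ^ 2 / σ) * ‖μ - ν‖)
        ∧ (∀ μ ν, ⟪d₁' μ - d₁' ν, μ - ν⟫ ≥ (θ ^ 2 / β) * ‖μ - ν‖ ^ 2) := by
  have hβ : 0 < β := lt_of_lt_of_le hσ hβσ
  set Bt := ContinuousLinearMap.adjoint B with hBt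
  refine ⟨fun μ => -(Bt (h' (-(B μ)))) + c, ?_, ?_, ?_⟩
  · intro μ
    rw [hasGradientAt_iff_hasFDerivAt]
    have h1 : HasFDerivAt (fun μ : K => h (-(B μ)))
        ((toDual ℝ H (h' (-(B μ)))).comp (-B)) μ := by
      have := (hh' (-(B μ))).hasFDerivAt.comp μ ((B.hasFDerivAt (x := μ)).neg)
      exact this
    have h2 : HasFDerivAt (fun μ : K => ⟪c, μ⟫) (innerSL ℝ c) μ := by
      simpa using (innerSL ℝ c).hasFDerivAt (x := μ)
    have := h1.add h2
    rw [hd₁]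
    refine this.congr_fderiv ?_
    apply ContinuousLinearMap.ext
    intro v
    simp [Bt, toDual_apply_apply, real_inner_comm, inner_add_left, inner_neg_left,
      ContinuousLinearMap.adjoint_inner_left, real_inner_comm (Bt _) v]
  · intro μ ν
    have key : (-(Bt (h' (-(B μ)))) + c) - (-(Bt (h' (-(B ν)))) + c)
        = -(Bt (h' (-(B μ)) - h' (-(B ν)))) := by
      simp [map_sub]; abel
    rw [key, norm_neg]
    have hBtnorm : ∀ w, ‖Bt w‖ ≤ a * ‖w‖ := by
      intro w
      have hB : ‖B‖ ≤ a := B.opNorm_le_bound (le_trans hθ.le hθa) hup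
      calc ‖Bt w‖ ≤ ‖Bt‖ * ‖w‖ := Bt.le_opNorm w
        _ ≤ a * ‖w‖ := by
            have : ‖Bt‖ = ‖B‖ := by
              rw [hBt]; exact LinearIsometryEquiv.norm_map ContinuousLinearMap.adjoint B
            rw [this]; exact mul_le_mul_of_nonneg_right hB (norm_nonneg w)
    calc ‖Bt (h' (-(B μ)) - h' (-(B ν)))‖ ≤ a * ‖h' (-(B μ)) - h' (-(B ν))‖ := hBtnorm _
      _ ≤ a * ((1 / σ) * ‖(-(B μ)) - (-(B ν))‖) :=
          mul_le_mul_of_nonneg_left (hLip _ _) (le_trans hθ.le hθa)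
      _ = a / σ * ‖B (ν - μ)‖ := by
          rw [show -(B μ) - -(B ν) = B (ν - μ) by rw [map_sub]; abel]; ring
      _ ≤ a / σ * (a * ‖ν - μ‖) :=
          mul_le_mul_of_nonneg_left (hup _) (div_nonneg (hθ.le.trans hθa) hσ.le)
      _ = a ^ 2 / σ * ‖μ - ν‖ := by rw [norm_sub_rev]; ring
  · intro μ ν
    have key : (-(Bt (h' (-(B μ)))) + c) - (-(Bt (h' (-(B ν)))) + c)
        = -(Bt (h' (-(B μ)) - h' (-(B ν)))) := by
      simp [map_sub]; abel
    rw [key]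
    have : ⟪-(Bt (h' (-(B μ)) - h' (-(B ν)))), μ - ν⟫
        = ⟪h' (-(B μ)) - h' (-(B ν)), (-(B μ)) - (-(B ν))⟫ := by
      rw [inner_neg_left, hBt, ContinuousLinearMap.adjoint_inner_left]
      rw [show (-(B μ)) - (-(B ν)) = -(B (μ - ν)) by rw [map_sub]; abel]
      rw [inner_neg_right]
    rw [this]
    have h1 := hmono (-(B μ)) (-(B ν))
    have h2 : ‖(-(B μ)) - (-(B ν))‖ = ‖B (μ - ν)‖ := by
      rw [show (-(B μ)) - (-(B ν)) = -(B (μ - ν)) by rw [map_sub]; abel, norm_neg]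
    rw [h2] at h1
    refine le_trans ?_ h1
    have h3 : θ * ‖μ - ν‖ ≤ ‖B (μ - ν)‖ := hlow _
    have h4 : (θ * ‖μ - ν‖) ^ 2 ≤ ‖B (μ - ν)‖ ^ 2 :=
      pow_le_pow_left₀ (by positivity) h3 2
    calc θ ^ 2 / β * ‖μ - ν‖ ^ 2 = (1 / β) * (θ * ‖μ - ν‖) ^ 2 := by ring
      _ ≤ (1 / β) * ‖B (μ - ν)‖ ^ 2 := by
          exact mul_le_mul_of_nonneg_left h4 (by positivity)
end

section
/- Let H be a real Hilbert space, γ > 0, β ≥ σ > 0, and let f : H → ℝ be differentiable, σ-strongly convex and β-smooth, with proximal operator p = prox_{γf} and reflected proximal operator R_f = 2p − Id. Let S : H → H be any nonexpansive map (in particular, S = R_{γg} for a convex continuous g). Then the composition S ∘ R_f is δ-contractive with δ := max((γβ − 1)/(γβ + 1), (1 − γσ)/(1 + γσ)): for all z₁, z₂ ∈ H, ‖S(R_f(z₁)) − S(R_f(z₂))‖ ≤ δ‖z₁ − z₂‖, and δ < 1. -/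
open scoped RealInnerProductSpace

section Aux

variable {H : Type*} [NormedAddCommGroup H] [InnerProductSpace ℝ H]

private lemma sq_norm_smul (t : ℝ) (x : H) : ‖t • x‖ ^ 2 = t ^ 2 * ‖x‖ ^ 2 := by
  rw [norm_smul, mul_pow, Real.norm_eq_abs, sq_abs]

/-- Scalar core inequality. -/
private lemma scalar_core (a b δ s R T : ℝ) (ha : 0 < a) (hab : a ≤ b)
    (hs : 0 ≤ s) (hR : 0 ≤ R) (hCS : T ^ 2 ≤ s * R)
    (hint : a * b * s + R ≤ (a + b) * T)
    (hA : (1 - a) ^ 2 ≤ δ ^ 2 * (1 + a) ^ 2)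
    (hB : (b - 1) ^ 2 ≤ δ ^ 2 * (1 + b) ^ 2)
    (hδ0 : 0 ≤ δ) (hδ1 : δ < 1) :
    (1 - δ ^ 2) * (s + R) ≤ 2 * (1 + δ ^ 2) * T := by
  have hb : 0 < b := lt_of_lt_of_le ha hab
  have hT0 : 0 ≤ T := by
    have h6 : 0 ≤ (a + b) * T := le_trans (by positivity) hint
    have h7 := div_nonneg h6 (le_of_lt (add_pos ha hb))
    rwa [mul_div_cancel_left₀ _ (by positivity : a + b ≠ 0)] at h7
  have h5 : s * R ≤ s * ((a + b) * T - a * b * s) :=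
    mul_le_mul_of_nonneg_left (by linarith) hs
  have hq : 0 ≤ (T - a * s) * (b * s - T) := by nlinarith
  have hTas : a * s ≤ T := by
    nlinarith [sq_nonneg (a * s - T), mul_nonneg hs (sub_nonneg.2 hab)]
  have hTbs : T ≤ b * s := by
    nlinarith [sq_nonneg (b * s - T), mul_nonneg hs (sub_nonneg.2 hab)]
  have hδsq : δ ^ 2 < 1 := by nlinarith
  have hδsq' : (0:ℝ) ≤ 1 - δ ^ 2 := by nlinarith
  rcases le_or_gt 0 (2 * (1 + δ ^ 2) - (1 - δ ^ 2) * (a + b)) with hK | hK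
  · linarith [mul_nonneg hK (sub_nonneg.2 hTas),
      mul_nonneg hs (sub_nonneg.2 hA),
      mul_nonneg hδsq' (sub_nonneg.2 hint)]
  · linarith [mul_nonneg (le_of_lt (neg_pos.2 hK)) (sub_nonneg.2 hTbs),
      mul_nonneg hs (sub_nonneg.2 hB),
      mul_nonneg hδsq' (sub_nonneg.2 hint)]

end Aux

set_option maxHeartbeats 2000000 in
/-- Composing any nonexpansive map `S` (e.g. `S = R_{γg}`) with the reflected proximal
operator `R_f = 2·prox_{γf} − Id` of a `σ`-strongly convex, `β`-smooth `f` yields a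
`δ`-contraction with `δ = max((γβ−1)/(γβ+1), (1−γσ)/(1+γσ)) < 1`. -/
theorem nonexpansive_comp_reflected_prox_contractive
    {H : Type*} [NormedAddCommGroup H] [InnerProductSpace ℝ H] [CompleteSpace H]
    (γ β σ : ℝ) (hγ : 0 < γ) (hσ : 0 < σ) (hβσ : σ ≤ β)
    (f : H → ℝ) (f' : H → H) (hf' : ∀ x, HasGradientAt f (f' x) x)
    (hsc : ∀ x y, f x ≥ f y + ⟪f' y, x - y⟫ + σ / 2 * ‖x - y‖ ^ 2)
    (hsm : ∀ x y, f x ≤ f y + ⟪f' y, x - y⟫ + β / 2 * ‖x - y‖ ^ 2)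
    (p : H → H)
    (hp : ∀ y x, γ * f (p y) + (1 / 2) * ‖p y - y‖ ^ 2 ≤ γ * f x + (1 / 2) * ‖x - y‖ ^ 2)
    (Rf : H → H) (hRf : Rf = fun x => (2 : ℝ) • p x - x)
    (S : H → H) (hS : ∀ x y, ‖S x - S y‖ ≤ ‖x - y‖)
    (δ : ℝ) (hδ : δ = max ((γ * β - 1) / (γ * β + 1)) ((1 - γ * σ) / (1 + γ * σ))) :
    (∀ z₁ z₂, ‖S (Rf z₁) - S (Rf z₂)‖ ≤ δ * ‖z₁ - z₂‖) ∧ δ < 1 := by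
  have hβ : 0 < β := lt_of_lt_of_le hσ hβσ
  have hb1 : (0:ℝ) < γ * β + 1 := by nlinarith
  have ha1 : (0:ℝ) < 1 + γ * σ := by nlinarith
  -- basic facts about δ
  have hd1 : (γ * β - 1) / (γ * β + 1) ≤ δ := hδ ▸ le_max_left _ _
  have hd2 : (1 - γ * σ) / (1 + γ * σ) ≤ δ := hδ ▸ le_max_right _ _
  have hd1' : γ * β - 1 ≤ δ * (γ * β + 1) := by
    rw [div_le_iff₀ hb1] at hd1; linarith
  have hd2' : 1 - γ * σ ≤ δ * (1 + γ * σ) := by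
    rw [div_le_iff₀ ha1] at hd2; linarith
  have hδ1 : δ < 1 := by
    rw [hδ]
    apply max_lt
    · rw [div_lt_one hb1]; nlinarith
    · rw [div_lt_one ha1]; nlinarith
  have hδ0 : 0 ≤ δ := by
    rcases le_total 1 (γ * β) with h | h
    · refine le_trans ?_ hd1
      apply div_nonneg <;> linarith
    · refine le_trans ?_ hd2
      have hab : γ * σ ≤ γ * β := by nlinarith
      apply div_nonneg <;> linarith
  -- the other two linear bounds
  have hd3' : γ * σ - 1 ≤ δ * (1 + γ * σ) := by
    nlinarith [mul_le_mul_of_nonneg_right hd1' (le_of_lt ha1)]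
  have hd4' : 1 - γ * β ≤ δ * (γ * β + 1) := by
    nlinarith [mul_le_mul_of_nonneg_right hd2' (le_of_lt hb1)]
  have hA : (1 - γ * σ) ^ 2 ≤ δ ^ 2 * (1 + γ * σ) ^ 2 := by
    nlinarith [mul_nonneg hδ0 (le_of_lt ha1)]
  have hB : (γ * β - 1) ^ 2 ≤ δ ^ 2 * (1 + γ * β) ^ 2 := by
    nlinarith [mul_nonneg hδ0 (le_of_lt hb1)]
  -- optimality condition for the prox
  have opt : ∀ y, γ • f' (p y) = y - p y := by
    intro y
    set u := p y with hu
    set h : H := (y - u) - γ • f' u with hh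
    set t : ℝ := 1 / (γ * β + 1) with htdef
    have hb1' : (0:ℝ) < γ * β + 1 := by nlinarith
    have ht : 0 < t := by positivity
    have hle : ‖h‖ ^ 2 ≤ 0 := by
      have h1 := hp y (u + t • h)
      have h2 := hsm (u + t • h) u
      have e0 : u + t • h - u = t • h := by abel
      have e1 : u + t • h - y = (u - y) + t • h := by abel
      rw [e0] at h2
      rw [e1, norm_add_sq_real, real_inner_smul_right, sq_norm_smul] at h1
      rw [real_inner_smul_right, sq_norm_smul] at h2
      have e3 : γ • f' u + (u - y) = -h := by rw [hh]; module
      have e4 : γ * ⟪f' u, h⟫ + ⟪u - y, h⟫ = -‖h‖ ^ 2 := by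
        rw [← real_inner_smul_left, ← inner_add_left, e3, inner_neg_left,
          real_inner_self_eq_norm_sq]
      have e5 : t * (γ * ⟪f' u, h⟫ + ⟪u - y, h⟫) = t * (-‖h‖ ^ 2) := by rw [e4]
      have h2' := mul_le_mul_of_nonneg_left h2 (le_of_lt hγ)
      have key : t * ‖h‖ ^ 2 ≤ (γ * β + 1) / 2 * t ^ 2 * ‖h‖ ^ 2 := by nlinarith
      have hct : (γ * β + 1) / 2 * t ^ 2 = t / 2 := by
        rw [htdef]; field_simp
      rw [hct] at key
      nlinarith [key, ht]
    have h0 : h = 0 := by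
      have : ‖h‖ ^ 2 = 0 := le_antisymm hle (sq_nonneg _)
      simpa using this
    rw [hh] at h0
    exact (sub_eq_zero.mp h0).symm
  -- interpolation inequality for the gradient of f
  have hinterp : ∀ u v : H,
      σ * β * ‖u - v‖ ^ 2 + ‖f' u - f' v‖ ^ 2 ≤ (σ + β) * ⟪u - v, f' u - f' v⟫ := by
    intro u v
    set w : H := u - v with hw
    set d : H := (f' u - f' v) - σ • w with hd
    -- step A
    have stepA : ∀ t : ℝ, (2 * t - (β - σ) * t ^ 2) * ‖d‖ ^ 2 ≤ ⟪d, w⟫ := by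
      intro t
      have c1 := hsc (v + t • d) u
      have c2 := hsm (v + t • d) v
      have c3 := hsc (u - t • d) v
      have c4 := hsm (u - t • d) u
      have e1 : v + t • d - u = t • d - w := by rw [hw]; module
      have e2 : v + t • d - v = t • d := by abel
      have e3 : u - t • d - v = w - t • d := by rw [hw]; module
      have e4 : u - t • d - u = -(t • d) := by abel
      rw [e1, norm_sub_sq_real, inner_sub_right, real_inner_smul_right,
        real_inner_smul_left, sq_norm_smul] at c1
      rw [e2, real_inner_smul_right, sq_norm_smul] at c2
      rw [e3, norm_sub_sq_real, inner_sub_right, real_inner_smul_right,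
        real_inner_smul_right, sq_norm_smul, real_inner_comm d w] at c3
      rw [e4, inner_neg_right, real_inner_smul_right, norm_neg, sq_norm_smul] at c4
      have hgw : ⟪f' u, w⟫ - ⟪f' v, w⟫ = ⟪d, w⟫ + σ * ‖w‖ ^ 2 := by
        have hgd : f' u - f' v = d + σ • w := by rw [hd]; module
        rw [← inner_sub_left, hgd, inner_add_left, real_inner_smul_left,
          real_inner_self_eq_norm_sq]
      have hgd : t * ⟪f' u, d⟫ - t * ⟪f' v, d⟫ = t * (‖d‖ ^ 2 + σ * ⟪d, w⟫) := by
        have hgd2 : f' u - f' v = d + σ • w := by rw [hd]; module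
        have : ⟪f' u, d⟫ - ⟪f' v, d⟫ = ‖d‖ ^ 2 + σ * ⟪d, w⟫ := by
          rw [← inner_sub_left, hgd2, inner_add_left, real_inner_smul_left,
            real_inner_self_eq_norm_sq, real_inner_comm d w]
        rw [← mul_sub, this]
      nlinarith [c1, c2, c3, c4, hgw, hgd]
    -- step B : ‖d‖² ≤ (β - σ) * ⟪d, w⟫
    have stepB : ‖d‖ ^ 2 ≤ (β - σ) * ⟪d, w⟫ := by
      rcases eq_or_lt_of_le hβσ with heq | hlt
      · -- β = σ : show ‖d‖² = 0 and ⟪d,w⟫ ≥ 0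
        have hz : ∀ t : ℝ, 2 * t * ‖d‖ ^ 2 ≤ ⟪d, w⟫ := by
          intro t
          have := stepA t
          rw [← heq] at this
          nlinarith [this]
        have hd2 : ‖d‖ ^ 2 ≤ 0 := by
          by_contra hc
          push_neg at hc
          have h1 := hz ((⟪d, w⟫ + 1) / (2 * ‖d‖ ^ 2))
          have h2 : 2 * ((⟪d, w⟫ + 1) / (2 * ‖d‖ ^ 2)) * ‖d‖ ^ 2 = ⟪d, w⟫ + 1 := by
            field_simp
            have hne : ‖d‖ ≠ 0 := fun h => by simp [h] at hc
            exact mul_div_cancel_right₀ _ hne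
          rw [h2] at h1
          linarith
        have : ‖d‖ ^ 2 = 0 := le_antisymm hd2 (sq_nonneg _)
        rw [this, ← heq]
        simp
      · have hL : (0:ℝ) < β - σ := by linarith
        have h1 := stepA (1 / (β - σ))
        have he : (2 * (1 / (β - σ)) - (β - σ) * (1 / (β - σ)) ^ 2) * ‖d‖ ^ 2
            = ‖d‖ ^ 2 / (β - σ) := by
          field_simp; ring
        rw [he, div_le_iff₀ hL] at h1
        nlinarith [h1]
    -- conclude interpolation
    have hg : f' u - f' v = d + σ • w := by rw [hd]; module
    have hnormg : ‖f' u - f' v‖ ^ 2 = ‖d‖ ^ 2 + 2 * σ * ⟪d, w⟫ + σ ^ 2 * ‖w‖ ^ 2 := by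
      rw [hg, norm_add_sq_real, real_inner_smul_right, sq_norm_smul]
      ring
    have hinnerg : ⟪w, f' u - f' v⟫ = ⟪d, w⟫ + σ * ‖w‖ ^ 2 := by
      rw [hg, inner_add_right, real_inner_smul_right, real_inner_self_eq_norm_sq,
        real_inner_comm d w]
    rw [hnormg, hinnerg]
    nlinarith [stepB]
  -- main estimate
  have main : ∀ z₁ z₂ : H, ‖Rf z₁ - Rf z₂‖ ≤ δ * ‖z₁ - z₂‖ := by
    intro z₁ z₂
    set u := p z₁ with hu
    set v := p z₂ with hv
    set w : H := u - v with hw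
    set g : H := f' u - f' v with hg
    have o1 : γ • f' u = z₁ - u := opt z₁
    have o2 : γ • f' v = z₂ - v := opt z₂
    have eR : Rf z₁ - Rf z₂ = w - γ • g := by
      rw [hRf]
      simp only [hw, hg, smul_sub]
      rw [← hu, ← hv]
      have : γ • f' u - γ • f' v = (z₁ - u) - (z₂ - v) := by rw [o1, o2]
      rw [this]
      module
    have eZ : z₁ - z₂ = w + γ • g := by
      simp only [hw, hg, smul_sub]
      have : γ • f' u - γ • f' v = (z₁ - u) - (z₂ - v) := by rw [o1, o2]
      rw [this]
      module
    -- scalar quantities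
    have hint := hinterp u v
    rw [← hw, ← hg] at hint
    have hCS : ⟪w, g⟫ ^ 2 ≤ ‖w‖ ^ 2 * ‖g‖ ^ 2 := by
      have h1 := abs_real_inner_le_norm w g
      nlinarith [abs_nonneg ⟪w, g⟫, sq_abs ⟪w, g⟫, norm_nonneg w, norm_nonneg g]
    have key := scalar_core (γ * σ) (γ * β) δ (‖w‖ ^ 2) (γ ^ 2 * ‖g‖ ^ 2) (γ * ⟪w, g⟫)
      (by positivity) (by nlinarith) (sq_nonneg _) (by positivity)
      (by nlinarith) (by nlinarith) hA (by nlinarith [hB]) hδ0 hδ1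
    have hsub : ‖w - γ • g‖ ^ 2 = ‖w‖ ^ 2 - 2 * (γ * ⟪w, g⟫) + γ ^ 2 * ‖g‖ ^ 2 := by
      rw [norm_sub_sq_real, real_inner_smul_right, sq_norm_smul]; try ring
    have hadd : ‖w + γ • g‖ ^ 2 = ‖w‖ ^ 2 + 2 * (γ * ⟪w, g⟫) + γ ^ 2 * ‖g‖ ^ 2 := by
      rw [norm_add_sq_real, real_inner_smul_right, sq_norm_smul]; try ring
    have hsq : ‖w - γ • g‖ ^ 2 ≤ (δ * ‖w + γ • g‖) ^ 2 := by
      rw [hsub, mul_pow, hadd]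
      nlinarith [key]
    have hfin : ‖w - γ • g‖ ≤ δ * ‖w + γ • g‖ := by
      nlinarith [norm_nonneg (w - γ • g), mul_nonneg hδ0 (norm_nonneg (w + γ • g)), hsq]
    rw [eR, eZ]
    exact hfin
  refine ⟨fun z₁ z₂ => ?_, hδ1⟩
  calc ‖S (Rf z₁) - S (Rf z₂)‖ ≤ ‖Rf z₁ - Rf z₂‖ := hS _ _
    _ ≤ δ * ‖z₁ - z₂‖ := main z₁ z₂
end
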